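/- arXiv:1509.02067 — 4 statements merged into one kernel-verified Lean document; each statement's English description precedes it below -/
import Mathlib

section
/- Edge-isoperimetric inequality for the hypercube: for any subset A of the vertices of the hypercube Q_n, the number of edges of Q_n with both endpoints in A is at most (1/2)·|A|·log₂|A|. -/
open Finset

/-- The hypercube graph `Q_n` on vertex set `{0,1}^n`. -/
def cube (n : ℕ) : SimpleGraph (Fin n → Bool) :=
  SimpleGraph.fromRel (fun x y => (Finset.univ.filter (fun i => x i ≠ y i)).card = 1)

/-! ### Auxiliary definitions -/

/-- Hamming distance. -/
def hd {n : ℕ} (x y : Fin n → Bool) : ℕ := (Finset.univ.filter (fun i => x i ≠ y i)).card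

lemma hd_comm {n : ℕ} (x y : Fin n → Bool) : hd x y = hd y x := by
  unfold hd; congr 1; ext i; simp [ne_comm]

lemma hd_eq_zero {n : ℕ} {x y : Fin n → Bool} : hd x y = 0 ↔ x = y := by
  unfold hd
  rw [Finset.card_eq_zero, Finset.filter_eq_empty_iff]
  simp [funext_iff]

lemma hd_ne {n : ℕ} {x y : Fin n → Bool} (h : hd x y = 1) : x ≠ y := by
  intro he; have h0 := hd_eq_zero.2 he; omega

lemma hd_snoc {n : ℕ} (x y : Fin n → Bool) (b c : Bool) :
    hd (Fin.snoc x b) (Fin.snoc y c) = hd x y + (if b ≠ c then 1 else 0) := by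
  unfold hd
  rw [Finset.card_filter, Finset.card_filter, Fin.sum_univ_castSucc]
  simp [Fin.snoc_last, Fin.snoc_castSucc]

lemma hd_succ {n : ℕ} (x y : Fin (n+1) → Bool) :
    hd x y = hd (Fin.init x) (Fin.init y) +
      (if x (Fin.last n) ≠ y (Fin.last n) then 1 else 0) := by
  conv_lhs => rw [← Fin.snoc_init_self x, ← Fin.snoc_init_self y]
  rw [hd_snoc]

/-- Section of a subset of the `(n+1)`-cube at last coordinate `b`. -/
def sec {n : ℕ} (b : Bool) (A : Finset (Fin (n+1) → Bool)) : Finset (Fin n → Bool) :=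
  Finset.univ.filter (fun y => Fin.snoc y b ∈ A)

/-- Number of ordered adjacent pairs within `A`. -/
def pc (n : ℕ) (A : Finset (Fin n → Bool)) : ℕ :=
  ((A ×ˢ A).filter (fun p => hd p.1 p.2 = 1)).card

lemma filter_card_sec {n : ℕ} (b : Bool) (A : Finset (Fin (n+1) → Bool)) :
    (A.filter (fun x => x (Fin.last n) = b)).card = (sec b A).card := by
  apply Finset.card_nbij' Fin.init (Fin.snoc · b)
  · intro x hx
    rw [Finset.mem_coe, Finset.mem_filter] at hx
    rw [Finset.mem_coe, sec, Finset.mem_filter]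
    refine ⟨Finset.mem_univ _, ?_⟩
    rw [show Fin.snoc (Fin.init x) b = x by rw [← hx.2]; exact Fin.snoc_init_self x]
    exact hx.1
  · intro y hy
    simp only [Finset.mem_coe, sec, Finset.mem_filter] at hy
    exact Finset.mem_filter.2 ⟨hy.2, Fin.snoc_last ..⟩
  · intro x hx
    rw [Finset.mem_coe, Finset.mem_filter] at hx
    rw [← hx.2]; exact Fin.snoc_init_self x
  · intro y _; exact Fin.init_snoc ..

lemma card_sec_add {n : ℕ} (A : Finset (Fin (n+1) → Bool)) :
    (sec false A).card + (sec true A).card = A.card := by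
  rw [← filter_card_sec false A, ← filter_card_sec true A]
  conv_rhs => rw [← Finset.card_filter_add_card_filter_not
    (p := fun x => x (Fin.last n) = false) (s := A)]
  congr 2
  apply Finset.filter_congr
  intro x _
  simp

lemma card_Q_same {n : ℕ} (A : Finset (Fin (n+1) → Bool)) (b : Bool) :
    ((((A ×ˢ A).filter (fun p : (Fin (n+1) → Bool) × (Fin (n+1) → Bool) => hd p.1 p.2 = 1)).filter
      (fun p => p.1 (Fin.last n) = b ∧ p.2 (Fin.last n) = b))).card = pc n (sec b A) := by
  apply Finset.card_nbij' (fun p => (Fin.init p.1, Fin.init p.2))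
    (fun q => (Fin.snoc q.1 b, Fin.snoc q.2 b))
  · intro p hp
    simp only [Finset.mem_coe, Finset.mem_filter, Finset.mem_product] at hp
    obtain ⟨⟨⟨h1, h2⟩, hD⟩, hb1, hb2⟩ := hp
    have e1 : Fin.snoc (Fin.init p.1) b = p.1 := by rw [← hb1]; exact Fin.snoc_init_self _
    have e2 : Fin.snoc (Fin.init p.2) b = p.2 := by rw [← hb2]; exact Fin.snoc_init_self _
    simp only [Finset.mem_coe, pc, sec, Finset.mem_filter, Finset.mem_product, Finset.mem_univ, true_and]
    refine ⟨⟨?_, ?_⟩, ?_⟩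
    · rw [e1]; exact h1
    · rw [e2]; exact h2
    · rw [hd_succ p.1 p.2, hb1, hb2] at hD; simpa using hD
  · intro q hq
    simp only [Finset.mem_coe, pc, sec, Finset.mem_filter, Finset.mem_product, Finset.mem_univ, true_and] at hq
    obtain ⟨⟨h1, h2⟩, hD⟩ := hq
    simp only [Finset.mem_coe, Finset.mem_filter, Finset.mem_product]
    refine ⟨⟨⟨h1, h2⟩, ?_⟩, ?_, ?_⟩
    · rw [hd_snoc]; simpa using hD
    · exact Fin.snoc_last ..
    · exact Fin.snoc_last ..
  · intro p hp
    simp only [Finset.mem_coe, Finset.mem_filter, Finset.mem_product] at hp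
    obtain ⟨⟨_, _⟩, hb1, hb2⟩ := hp
    ext <;> simp only []
    · rw [show Fin.snoc (Fin.init p.1) b = p.1 by rw [← hb1]; exact Fin.snoc_init_self _]
    · rw [show Fin.snoc (Fin.init p.2) b = p.2 by rw [← hb2]; exact Fin.snoc_init_self _]
  · intro q _
    simp [Fin.init_snoc]

lemma card_Q_diff {n : ℕ} (A : Finset (Fin (n+1) → Bool)) (b c : Bool) (hbc : b ≠ c) :
    ((((A ×ˢ A).filter (fun p : (Fin (n+1) → Bool) × (Fin (n+1) → Bool) => hd p.1 p.2 = 1)).filter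
      (fun p => p.1 (Fin.last n) = b ∧ p.2 (Fin.last n) = c))).card
      = ((sec b A) ∩ (sec c A)).card := by
  apply Finset.card_nbij' (fun p => Fin.init p.1) (fun z => (Fin.snoc z b, Fin.snoc z c))
  · intro p hp
    simp only [Finset.mem_coe, Finset.mem_filter, Finset.mem_product] at hp
    obtain ⟨⟨⟨h1, h2⟩, hD⟩, hb1, hb2⟩ := hp
    have hinit : Fin.init p.1 = Fin.init p.2 := by
      rw [hd_succ p.1 p.2, hb1, hb2, if_pos hbc] at hD
      exact hd_eq_zero.1 (by omega)
    have e1 : Fin.snoc (Fin.init p.1) b = p.1 := by rw [← hb1]; exact Fin.snoc_init_self _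
    have e2 : Fin.snoc (Fin.init p.1) c = p.2 := by
      rw [hinit, ← hb2]; exact Fin.snoc_init_self _
    simp only [Finset.mem_coe, sec, Finset.mem_inter, Finset.mem_filter, Finset.mem_univ, true_and]
    constructor
    · rw [e1]; exact h1
    · rw [e2]; exact h2
  · intro z hz
    simp only [Finset.mem_coe, sec, Finset.mem_inter, Finset.mem_filter, Finset.mem_univ, true_and] at hz
    simp only [Finset.mem_coe, Finset.mem_filter, Finset.mem_product]
    refine ⟨⟨⟨hz.1, hz.2⟩, ?_⟩, ?_, ?_⟩
    · rw [hd_snoc, hd_eq_zero.2 rfl, if_pos hbc]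
    · exact Fin.snoc_last ..
    · exact Fin.snoc_last ..
  · intro p hp
    simp only [Finset.mem_coe, Finset.mem_filter, Finset.mem_product] at hp
    obtain ⟨⟨⟨h1, h2⟩, hD⟩, hb1, hb2⟩ := hp
    have hinit : Fin.init p.1 = Fin.init p.2 := by
      rw [hd_succ p.1 p.2, hb1, hb2, if_pos hbc] at hD
      exact hd_eq_zero.1 (by omega)
    ext <;> simp only []
    · rw [show Fin.snoc (Fin.init p.1) b = p.1 by rw [← hb1]; exact Fin.snoc_init_self _]
    · rw [hinit, show Fin.snoc (Fin.init p.2) c = p.2 by rw [← hb2]; exact Fin.snoc_init_self _]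
  · intro z _
    simp [Fin.init_snoc]

lemma bool_split {α : Type*} (S : Finset α) (f : α → Bool) :
    S.card = (S.filter (fun a => f a = false)).card + (S.filter (fun a => f a = true)).card := by
  conv_lhs => rw [← Finset.card_filter_add_card_filter_not
    (p := fun a => f a = false) (s := S)]
  congr 2
  apply Finset.filter_congr
  intro x _
  simp

lemma pc_split {n : ℕ} (A : Finset (Fin (n+1) → Bool)) :
    pc (n+1) A = pc n (sec false A) + pc n (sec true A)
      + 2 * ((sec false A) ∩ (sec true A)).card := by
  set P := (A ×ˢ A).filter
    (fun p : (Fin (n+1) → Bool) × (Fin (n+1) → Bool) => hd p.1 p.2 = 1) with hP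
  have h1 : pc (n+1) A = P.card := rfl
  rw [h1, bool_split P (fun p => p.1 (Fin.last n)),
    bool_split (P.filter _) (fun p => p.2 (Fin.last n)),
    bool_split (P.filter (fun p => p.1 (Fin.last n) = true)) (fun p => p.2 (Fin.last n))]
  simp only [Finset.filter_filter, hP]
  simp only [and_assoc]
  have q00 := card_Q_same A false
  have q11 := card_Q_same A true
  have q01 := card_Q_diff A false true (by simp)
  have q10 := card_Q_diff A true false (by simp)
  simp only [Finset.filter_filter] at q00 q11 q01 q10
  rw [q00, q11, q01, q10]
  rw [show (sec true A ∩ sec false A).card = (sec false A ∩ sec true A).card by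
    rw [Finset.inter_comm]]
  ring

/-! ### Analytic lemmas -/

lemma entropy_chord (t : ℝ) (h0 : 0 ≤ t) (h1 : t ≤ 2⁻¹) :
    2 * t * Real.log 2 ≤ Real.binEntropy t := by
  have hc := Real.strictConcave_binEntropy.concaveOn
  have h2 : (1-2*t) • Real.binEntropy 0 + (2*t) • Real.binEntropy 2⁻¹ ≤
      Real.binEntropy ((1-2*t) • (0:ℝ) + (2*t) • (2⁻¹:ℝ)) :=
    hc.2 (Set.mem_Icc.2 ⟨le_refl 0, by norm_num⟩)
      (Set.mem_Icc.2 ⟨by norm_num, by norm_num⟩) (by linarith) (by linarith) (by ring)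
  simp only [smul_eq_mul, Real.binEntropy_zero, Real.binEntropy_two_inv, mul_zero, zero_add] at h2
  have h : 2*t*(2⁻¹:ℝ) = t := by ring
  rw [h] at h2; linarith

lemma log_step (a b : ℝ) (h0 : 0 ≤ a) (hab : a ≤ b) :
    a * Real.logb 2 a + b * Real.logb 2 b + 2*a ≤ (a+b) * Real.logb 2 (a+b) := by
  rcases eq_or_lt_of_le h0 with h|ha
  · simp [← h]
  have hb : 0 < b := lt_of_lt_of_le ha hab
  have hs : 0 < a + b := by linarith
  have ht0 : 0 ≤ a / (a+b) := by positivity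
  have ht1 : a / (a+b) ≤ 2⁻¹ := by rw [div_le_iff₀ hs]; linarith
  have hE := entropy_chord _ ht0 ht1
  have h1t : 1 - a/(a+b) = b / (a+b) := by field_simp; ring
  rw [Real.binEntropy, h1t, Real.log_inv, Real.log_inv, Real.log_div ha.ne' hs.ne',
    Real.log_div hb.ne' hs.ne'] at hE
  have hE2 := mul_le_mul_of_nonneg_left hE hs.le
  have ea : (a+b) * (a/(a+b)) = a := by field_simp
  have eb : (a+b) * (b/(a+b)) = b := by field_simp
  have hkey : a * Real.log a + b * Real.log b + 2 * a * Real.log 2 ≤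
      (a+b) * Real.log (a+b) := by
    have expand : (a+b) * (a/(a+b) * -(Real.log a - Real.log (a+b)) +
        b/(a+b) * -(Real.log b - Real.log (a+b)))
        = ((a+b)*(a/(a+b))) * (Real.log (a+b) - Real.log a)
          + ((a+b)*(b/(a+b))) * (Real.log (a+b) - Real.log b) := by ring
    rw [expand, ea, eb] at hE2
    have expand2 : (a+b) * (2 * (a/(a+b)) * Real.log 2)
        = ((a+b)*(a/(a+b))) * (2 * Real.log 2) := by ring
    rw [expand2, ea] at hE2
    nlinarith [hE2]
  have hl2 : (0:ℝ) < Real.log 2 := Real.log_pos (by norm_num)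
  simp only [Real.logb]
  have e1 : a * (Real.log a / Real.log 2) + b * (Real.log b / Real.log 2) + 2*a
      = (a*Real.log a + b*Real.log b + 2*a*Real.log 2)/Real.log 2 := by field_simp
  have e2 : (a+b) * (Real.log (a+b)/Real.log 2) = ((a+b)*Real.log (a+b))/Real.log 2 := by ring
  rw [e1, e2]
  gcongr

/-! ### Main induction -/

lemma pc_le (n : ℕ) (A : Finset (Fin n → Bool)) :
    (pc n A : ℝ) ≤ A.card * Real.logb 2 A.card := by
  induction n with
  | zero =>
    have h0 : pc 0 A = 0 := by
      apply Finset.card_eq_zero.2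
      rw [Finset.filter_eq_empty_iff]
      intro p _
      have : hd p.1 p.2 = 0 := by simp [hd]
      omega
    rw [h0]
    have hA : A.card ≤ 1 := by
      have h := Finset.card_le_univ A
      simpa using h
    interval_cases h : A.card <;> norm_num
  | succ n ih =>
    have hsplit := pc_split A
    have hcard := card_sec_add A
    set a := (sec false A).card with haa
    set b := (sec true A).card with hbb
    have hint : ((sec false A) ∩ (sec true A)).card ≤ min a b := by
      refine le_min ?_ ?_
      · exact Finset.card_le_card Finset.inter_subset_left
      · exact Finset.card_le_card Finset.inter_subset_right
    have hf := ih (sec false A)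
    have ht := ih (sec true A)
    have hstep : (a : ℝ) * Real.logb 2 a + b * Real.logb 2 b + 2 * min a b
        ≤ (a + b) * Real.logb 2 (a + b) := by
      rcases le_total a b with h | h
      · have := log_step (a : ℝ) (b : ℝ) (by positivity) (by exact_mod_cast h)
        have hm : (min a b : ℕ) = a := min_eq_left h
        rw [hm]
        push_cast
        linarith
      · have := log_step (b : ℝ) (a : ℝ) (by positivity) (by exact_mod_cast h)
        have hm : (min a b : ℕ) = b := min_eq_right h
        rw [hm]
        rw [add_comm (b:ℝ) (a:ℝ)] at this
        push_cast
        linarith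
    have hAc : (A.card : ℝ) = (a : ℝ) + b := by exact_mod_cast hcard.symm
    rw [hsplit]
    push_cast
    rw [hAc]
    have hint' : (((sec false A) ∩ (sec true A)).card : ℝ) ≤ (min a b : ℕ) := by
      exact_mod_cast hint
    push_cast at hint'
    calc (pc n (sec false A) : ℝ) + pc n (sec true A)
          + 2 * ((sec false A) ∩ (sec true A)).card
        ≤ (a : ℝ) * Real.logb 2 a + b * Real.logb 2 b + 2 * min a b := by
          push_cast
          linarith [hf, ht, hint']
      _ ≤ ((a : ℝ) + b) * Real.logb 2 ((a : ℝ) + b) := by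
          convert hstep using 3 <;> push_cast <;> ring
      _ = ((a : ℝ) + b) * Real.logb 2 ((a : ℝ) + b) := rfl

/-! ### From the edge set to pair counting -/

/-- The graph on the cube restricted to `A`. -/
def Hg (n : ℕ) (A : Finset (Fin n → Bool)) : SimpleGraph (Fin n → Bool) where
  Adj x y := hd x y = 1 ∧ x ∈ A ∧ y ∈ A
  symm := by
    constructor
    intro x y ⟨h, ha, hb⟩
    exact ⟨by rwa [hd_comm], hb, ha⟩
  loopless := by
    constructor
    intro x ⟨h, _⟩
    have := hd_eq_zero.2 (rfl : x = x)
    omega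

instance {n : ℕ} {A : Finset (Fin n → Bool)} : DecidableRel (Hg n A).Adj :=
  fun x y => inferInstanceAs (Decidable (hd x y = 1 ∧ x ∈ A ∧ y ∈ A))

lemma Hg_adj {n : ℕ} {A : Finset (Fin n → Bool)} {x y : Fin n → Bool} :
    (Hg n A).Adj x y ↔ hd x y = 1 ∧ x ∈ A ∧ y ∈ A := Iff.rfl

lemma edgeSet_eq (n : ℕ) (A : Finset (Fin n → Bool)) :
    {e ∈ (cube n).edgeSet | ∀ x ∈ e, x ∈ A} = (Hg n A).edgeSet := by
  ext e
  induction e using Sym2.ind with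
  | _ x y =>
    simp only [Set.mem_setOf_eq, SimpleGraph.mem_edgeSet, cube, SimpleGraph.fromRel_adj]
    constructor
    · rintro ⟨⟨hne, hor⟩, hall⟩
      have h1 : hd x y = 1 := by
        rcases hor with h | h
        · exact h
        · rwa [hd_comm]
      exact ⟨h1, hall x (by simp), hall y (by simp)⟩
    · rintro ⟨h1, ha, hb⟩
      refine ⟨⟨hd_ne h1, Or.inl h1⟩, ?_⟩
      intro z hz
      rw [Sym2.mem_iff] at hz
      rcases hz with h | h <;> subst h
      · exact ha
      · exact hb

lemma sum_degrees_eq_pc (n : ℕ) (A : Finset (Fin n → Bool)) :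
    ∑ v, (Hg n A).degree v = pc n A := by
  have hdeg : ∀ v, (Hg n A).degree v = (Finset.univ.filter ((Hg n A).Adj v)).card := by
    intro v
    rw [← SimpleGraph.neighborFinset_eq_filter]
    rfl
  simp only [hdeg]
  have hset : (A ×ˢ A).filter (fun p => hd p.1 p.2 = 1)
      = (Finset.univ ×ˢ Finset.univ).filter (fun p => (Hg n A).Adj p.1 p.2) := by
    ext p
    simp only [Finset.mem_filter, Finset.mem_product, Finset.mem_univ, true_and, Hg_adj]
    tauto
  rw [pc, hset]
  calc ∑ v, (Finset.univ.filter ((Hg n A).Adj v)).card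
      = ∑ v, ∑ y, (if (Hg n A).Adj v y then 1 else 0) := by
        refine Finset.sum_congr rfl fun v _ => Finset.card_filter _ _
    _ = ∑ p ∈ Finset.univ ×ˢ Finset.univ, (if (Hg n A).Adj p.1 p.2 then 1 else 0) := by
        rw [Finset.sum_product]
    _ = ((Finset.univ ×ˢ Finset.univ).filter (fun p => (Hg n A).Adj p.1 p.2)).card :=
        (Finset.card_filter _ _).symm

/-- Edge-isoperimetric inequality for the hypercube: for any set `A` of vertices of `Q_n`,
the number of edges with both endpoints in `A` is at most `(1/2)·|A|·log₂|A|`. -/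
theorem cube_isoperimetric (n : ℕ) (A : Finset (Fin n → Bool)) :
    (Set.ncard {e ∈ (cube n).edgeSet | ∀ x ∈ e, x ∈ A} : ℝ) ≤
      (1 / 2) * A.card * Real.logb 2 A.card := by
  rw [edgeSet_eq n A]
  have hnc : (Hg n A).edgeSet.ncard = (Hg n A).edgeFinset.card := by
    rw [Set.ncard_eq_toFinset_card']
    congr 1
  have hhs := SimpleGraph.sum_degrees_eq_twice_card_edges (Hg n A)
  rw [sum_degrees_eq_pc n A] at hhs
  have hpc := pc_le n A
  rw [hnc]
  have hcast : (pc n A : ℝ) = 2 * ((Hg n A).edgeFinset.card : ℝ) := by exact_mod_cast hhs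
  have hring : (1/2 : ℝ) * (A.card : ℝ) * Real.logb 2 (A.card : ℝ)
      = ((A.card : ℝ) * Real.logb 2 (A.card : ℝ)) / 2 := by ring
  rw [hring]
  linarith
end

section
/- Splitting probability bound: consider a permutation σ of the vertex set of the hypercube Q_n whose cycles partition Q_n, and draw an edge e uniformly at random from the n·2^(n−1) edges of Q_n. Let S^{≤k} be the event that both endpoints of e lie in the same cycle of σ and at cyclic distance at most k along the cycle (so that composing with the transposition of the endpoints of e splits that cycle producing a cycle of length ≤ k). Then P(S^{≤k}) ≤ 2·log₂(2k)/n. -/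
namespace SplitProb

def ham {n : ℕ} (x y : Fin n → Bool) : ℕ := (Finset.univ.filter (fun i => x i ≠ y i)).card

lemma ham_comm {n : ℕ} (x y : Fin n → Bool) : ham x y = ham y x := by
  unfold ham; congr 1; ext i; simp [ne_comm]

lemma cube_adj {n : ℕ} {x y : Fin n → Bool} : (cube n).Adj x y ↔ ham x y = 1 := by
  constructor
  · rintro ⟨hne, h | h⟩
    · exact h
    · rw [ham_comm]; exact h
  · intro h
    refine ⟨?_, Or.inl h⟩
    rintro rfl
    simp [ham] at h

instance cubeAdjDec {n : ℕ} : DecidableRel (cube n).Adj := fun x y =>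
  decidable_of_iff (ham x y = 1) cube_adj.symm

lemma ham_succ {n : ℕ} (x y : Fin (n+1) → Bool) :
    ham x y = (if x 0 ≠ y 0 then 1 else 0) + ham (Fin.tail x) (Fin.tail y) := by
  unfold ham
  rw [Finset.card_filter, Finset.card_filter, Fin.sum_univ_succ]
  rfl

open Real in
lemma logb_lin {t : ℝ} (h0 : 0 ≤ t) (h1 : t ≤ 1) : t ≤ Real.logb 2 (1+t) := by
  have hexp : Real.exp (t * Real.log 2) ≤ 1 + t := by
    have hc := convexOn_exp.2 (Set.mem_univ (0:ℝ)) (Set.mem_univ (Real.log 2))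
      (by linarith : (0:ℝ) ≤ 1 - t) h0 (by ring)
    simp only [smul_eq_mul, mul_zero, zero_add, Real.exp_zero, Real.exp_log two_pos,
      mul_one] at hc
    linarith
  have hpos : (0:ℝ) < 1 + t := by linarith
  have hlog : t * Real.log 2 ≤ Real.log (1+t) := (Real.le_log_iff_exp_le hpos).2 hexp
  rw [Real.logb, le_div_iff₀ (Real.log_pos one_lt_two)]
  linarith

open Real in
lemma key_numeric {a b : ℝ} (ha : 0 ≤ a) (hab : a ≤ b) :
    a * logb 2 a + b * logb 2 b + 2*a ≤ (a+b) * logb 2 (a+b) := by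
  rcases eq_or_lt_of_le ha with h0 | hapos
  · simp [← h0]
  have hb : (0:ℝ) < b := lt_of_lt_of_le hapos hab
  have h1 : logb 2 a + 1 ≤ logb 2 (a+b) := by
    have : logb 2 (2*a) ≤ logb 2 (a+b) := by
      exact Real.logb_le_logb_of_le one_lt_two (by linarith) (by linarith)
    rw [Real.logb_mul two_ne_zero (ne_of_gt hapos), Real.logb_self_eq_one one_lt_two] at this
    linarith
  have h2 : b * logb 2 b + a ≤ b * logb 2 (a+b) := by
    have ht : a / b ≤ logb 2 (1 + a/b) := logb_lin (by positivity) ((div_le_one hb).2 hab)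
    have heq : logb 2 (a+b) = logb 2 b + logb 2 (1 + a/b) := by
      rw [← Real.logb_mul (ne_of_gt hb) (by positivity)]
      congr 1
      field_simp
      ring
    have : b * (a/b) ≤ b * logb 2 (1 + a/b) := by
      exact mul_le_mul_of_nonneg_left ht hb.le
    rw [mul_div_cancel₀ a (ne_of_gt hb)] at this
    rw [heq]
    linarith
  have := mul_le_mul_of_nonneg_left h1 ha
  nlinarith [this, h2]

lemma ham_eq_zero {n : ℕ} {x y : Fin n → Bool} : ham x y = 0 ↔ x = y := by
  unfold ham
  rw [Finset.card_eq_zero, Finset.filter_eq_empty_iff]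
  constructor
  · intro h; funext i; have := h (Finset.mem_univ i); simpa using this
  · rintro rfl i _; simp

def pairCount (n : ℕ) (A : Finset (Fin n → Bool)) : ℕ :=
  ((A ×ˢ A).filter fun z => (cube n).Adj z.1 z.2).card

def slice {n : ℕ} (A : Finset (Fin (n+1) → Bool)) (b : Bool) : Finset (Fin n → Bool) :=
  (A.filter fun x => x 0 = b).image Fin.tail

lemma slice_card {n : ℕ} (A : Finset (Fin (n+1) → Bool)) (b : Bool) :
    (slice A b).card = (A.filter fun x => x 0 = b).card := by
  apply Finset.card_image_of_injOn
  intro x hx y hy hxy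
  simp only [Finset.mem_coe, Finset.mem_filter] at hx hy
  rw [← Fin.cons_self_tail x, ← Fin.cons_self_tail y, hx.2, hy.2, hxy]

lemma card_split {n : ℕ} (A : Finset (Fin (n+1) → Bool)) :
    A.card = (slice A false).card + (slice A true).card := by
  rw [slice_card, slice_card]
  have h : (A.filter fun a => ¬ a 0 = false) = A.filter (fun x => x 0 = true) := by
    ext x; simp
  rw [← Finset.card_filter_add_card_filter_not (p := fun x => x 0 = false), h]

lemma pairCount_succ_le {n : ℕ} (A : Finset (Fin (n+1) → Bool)) :
    pairCount (n+1) A ≤ pairCount n (slice A false) + pairCount n (slice A true)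
      + 2 * ((slice A false) ∩ (slice A true)).card := by
  classical
  set P := ((A ×ˢ A).filter fun z => (cube (n+1)).Adj z.1 z.2) with hP
  have hcover : P ⊆ (P.filter fun z => z.1 0 = false ∧ z.2 0 = false)
      ∪ (P.filter fun z => z.1 0 = true ∧ z.2 0 = true)
      ∪ (P.filter fun z => z.1 0 = false ∧ z.2 0 = true)
      ∪ (P.filter fun z => z.1 0 = true ∧ z.2 0 = false) := by
    intro z hz
    simp only [Finset.mem_union, Finset.mem_filter]
    rcases Bool.eq_false_or_eq_true (z.1 0) with h1 | h1 <;>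
      rcases Bool.eq_false_or_eq_true (z.2 0) with h2 | h2 <;> tauto
  have hsame : ∀ b : Bool, (P.filter fun z => z.1 0 = b ∧ z.2 0 = b).card ≤
      pairCount n (slice A b) := by
    intro b
    unfold pairCount
    apply Finset.card_le_card_of_injOn
      (fun (z : (Fin (n+1) → Bool) × (Fin (n+1) → Bool)) => (Fin.tail z.1, Fin.tail z.2))
    · intro z hz
      simp only [Finset.coe_filter, Set.mem_setOf_eq, Finset.mem_filter, hP, Finset.mem_product] at hz
      obtain ⟨⟨⟨hz1, hz2⟩, hadj⟩, hb1, hb2⟩ := hz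
      have hham := cube_adj.1 hadj
      rw [ham_succ] at hham
      rw [if_neg (by rw [hb1, hb2]; simp)] at hham
      have htadj : (cube n).Adj (Fin.tail z.1) (Fin.tail z.2) := cube_adj.2 (by omega)
      simp only [Finset.coe_filter, Set.mem_setOf_eq, Finset.mem_filter, Finset.mem_product, slice]
      exact ⟨⟨Finset.mem_image_of_mem _ (Finset.mem_filter.2 ⟨hz1, hb1⟩),
        Finset.mem_image_of_mem _ (Finset.mem_filter.2 ⟨hz2, hb2⟩)⟩, htadj⟩
    · intro z hz w hw hzw
      simp only [Finset.mem_coe, Finset.mem_filter] at hz hw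
      have hzw1 : Fin.tail z.1 = Fin.tail w.1 := congrArg Prod.fst hzw
      have hzw2 : Fin.tail z.2 = Fin.tail w.2 := congrArg Prod.snd hzw
      ext1
      · rw [← Fin.cons_self_tail z.1, ← Fin.cons_self_tail w.1, hz.2.1, hw.2.1, hzw1]
      · rw [← Fin.cons_self_tail z.2, ← Fin.cons_self_tail w.2, hz.2.2, hw.2.2, hzw2]
  have hdiff : ∀ b c : Bool, b ≠ c → (P.filter fun z => z.1 0 = b ∧ z.2 0 = c).card ≤
      ((slice A false) ∩ (slice A true)).card := by
    intro b c hbc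
    have hteq : ∀ z ∈ P.filter (fun z => z.1 0 = b ∧ z.2 0 = c),
        Fin.tail z.1 = Fin.tail z.2 ∧ z.1 ∈ A ∧ z.2 ∈ A := by
      intro z hz
      simp only [Finset.mem_filter, hP, Finset.mem_product] at hz
      obtain ⟨⟨⟨hz1, hz2⟩, hadj⟩, hb1, hb2⟩ := hz
      have hham := cube_adj.1 hadj
      rw [ham_succ, if_pos (by rw [hb1, hb2]; exact hbc)] at hham
      exact ⟨ham_eq_zero.1 (by omega), hz1, hz2⟩
    apply Finset.card_le_card_of_injOn
      (fun (z : (Fin (n+1) → Bool) × (Fin (n+1) → Bool)) => Fin.tail z.1)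
    · intro z hz
      obtain ⟨ht, hz1, hz2⟩ := hteq z hz
      simp only [Finset.coe_filter, Set.mem_setOf_eq] at hz
      obtain ⟨_, hb1, hb2⟩ := hz
      have hmem : ∀ d : Bool, ∀ w, w ∈ A → w 0 = d → Fin.tail w ∈ slice A d :=
        fun d w hw hd => Finset.mem_image_of_mem _ (Finset.mem_filter.2 ⟨hw, hd⟩)
      have hcase : (z.1 0 = false ∧ z.2 0 = true) ∨ (z.1 0 = true ∧ z.2 0 = false) := by
        rw [hb1, hb2]; cases b <;> cases c <;> simp_all
      show Fin.tail z.1 ∈ slice A false ∩ slice A true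
      rcases hcase with ⟨h1, h2⟩ | ⟨h1, h2⟩
      · exact Finset.mem_inter.2 ⟨hmem false z.1 hz1 h1, ht ▸ hmem true z.2 hz2 h2⟩
      · exact Finset.mem_inter.2 ⟨ht ▸ hmem false z.2 hz2 h2, hmem true z.1 hz1 h1⟩
    · intro z hz w hw hzw
      obtain ⟨htz, _, _⟩ := hteq z hz
      obtain ⟨htw, _, _⟩ := hteq w hw
      simp only [Finset.mem_coe, Finset.mem_filter] at hz hw
      have hzw' : Fin.tail z.1 = Fin.tail w.1 := hzw
      ext1
      · rw [← Fin.cons_self_tail z.1, ← Fin.cons_self_tail w.1, hz.2.1, hw.2.1, hzw']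
      · rw [← Fin.cons_self_tail z.2, ← Fin.cons_self_tail w.2, hz.2.2, hw.2.2,
          ← htz, ← htw, hzw']
  calc pairCount (n+1) A = P.card := rfl
    _ ≤ _ := Finset.card_le_card hcover
    _ ≤ _ := by
        refine le_trans (Finset.card_union_le _ _) ?_
        refine le_trans (add_le_add (Finset.card_union_le _ _) le_rfl) ?_
        refine le_trans (add_le_add (add_le_add (Finset.card_union_le _ _) le_rfl) le_rfl) ?_
        have h1 := hsame false
        have h2 := hsame true
        have h3 := hdiff false true (by simp)
        have h4 := hdiff true false (by simp)
        omega

open Real in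
lemma iso : ∀ (n : ℕ) (A : Finset (Fin n → Bool)),
    (pairCount n A : ℝ) ≤ A.card * Real.logb 2 A.card := by
  intro n
  induction n with
  | zero =>
    intro A
    have h0 : pairCount 0 A = 0 := by
      unfold pairCount
      rw [Finset.card_eq_zero, Finset.filter_eq_empty_iff]
      intro z _ hadj
      exact (cube 0).ne_of_adj hadj (funext fun i => i.elim0)
    rw [h0]
    rcases Nat.eq_zero_or_pos A.card with h | h
    · simp [h]
    · push_cast
      exact mul_nonneg (by positivity)
        (Real.logb_nonneg one_lt_two (by exact_mod_cast h))
  | succ n ih =>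
    intro A
    set a := slice A false with ha
    set b := slice A true with hb
    have hrec := pairCount_succ_le A
    have hia : ((a ∩ b).card : ℝ) ≤ (a.card : ℝ) := by
      exact_mod_cast Finset.card_le_card (Finset.inter_subset_left)
    have hib : ((a ∩ b).card : ℝ) ≤ (b.card : ℝ) := by
      exact_mod_cast Finset.card_le_card (Finset.inter_subset_right)
    have key : (a.card:ℝ) * logb 2 a.card + (b.card:ℝ) * logb 2 b.card
        + 2*(((a∩b).card:ℝ)) ≤ ((a.card:ℝ)+(b.card:ℝ)) * logb 2 ((a.card:ℝ)+(b.card:ℝ)) := by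
      rcases le_total (a.card) (b.card) with h | h
      · have := key_numeric (a := (a.card:ℝ)) (b := (b.card:ℝ))
          (by positivity) (by exact_mod_cast h)
        linarith
      · have := key_numeric (a := (b.card:ℝ)) (b := (a.card:ℝ))
          (by positivity) (by exact_mod_cast h)
        have hc : ((b.card:ℝ))+(a.card:ℝ) = (a.card:ℝ)+(b.card:ℝ) := by ring
        rw [hc] at this
        linarith
    have hcast : (pairCount (n+1) A : ℝ) ≤ (pairCount n a : ℝ) + (pairCount n b : ℝ)
        + 2*(((a∩b).card:ℝ)) := by exact_mod_cast hrec
    have hA : (A.card : ℝ) = (a.card:ℝ) + (b.card:ℝ) := by exact_mod_cast card_split A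
    rw [hA]
    exact le_trans hcast (le_trans (by linarith [ih a, ih b]) (le_of_eq rfl))

def win {n : ℕ} (σ : Equiv.Perm (Fin n → Bool)) (k : ℕ) (v : Fin n → Bool) :
    Finset (Fin n → Bool) :=
  (Finset.range (2*k)).image (fun i => (σ ^ i) v)

lemma mem_win_self {n k : ℕ} (hk : 1 ≤ k) (σ : Equiv.Perm (Fin n → Bool)) (v) :
    v ∈ win σ k v := by
  apply Finset.mem_image.2 ⟨0, by simp [Finset.mem_range]; omega, by simp⟩

lemma win_card_le {n k : ℕ} (σ : Equiv.Perm (Fin n → Bool)) (v) :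
    (win σ k v).card ≤ 2*k :=
  le_trans Finset.card_image_le (by simp)

lemma win_card_pos {n k : ℕ} (hk : 1 ≤ k) (σ : Equiv.Perm (Fin n → Bool)) (v) :
    0 < (win σ k v).card :=
  Finset.card_pos.2 ⟨v, mem_win_self hk σ v⟩

open Function in
lemma coverage {n k : ℕ} (hk : 1 ≤ k) (σ : Equiv.Perm (Fin n → Bool))
    (x y : Fin n → Bool) (j : ℕ) (hj1 : 1 ≤ j) (hjk : j ≤ k) (hxy : (σ ^ j) x = y) :
    1 ≤ ∑ v ∈ Finset.univ.filter (fun v => x ∈ win σ k v ∧ y ∈ win σ k v),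
        2 / ((win σ k v).card : ℝ) := by
  classical
  set L := minimalPeriod ⇑σ x with hLdef
  have hper : x ∈ periodicPts ⇑σ := by
    refine mem_periodicPts.2 ⟨orderOf σ, orderOf_pos σ, ?_⟩
    show (⇑σ)^[orderOf σ] x = x
    rw [Equiv.Perm.iterate_eq_pow, pow_orderOf_eq_one]
    rfl
  have hL : 0 < L := minimalPeriod_pos_of_mem_periodicPts hper
  set m := min k L with hmdef
  have hm : 0 < m := lt_min hk hL
  set g : ℕ → (Fin n → Bool) := fun i => ((σ ^ i)⁻¹) x with hgdef
  have happly : ∀ i, (σ ^ i) (g i) = x := fun i => Equiv.apply_symm_apply _ x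
  -- injectivity of g on range m
  have hginj : ∀ i ∈ Finset.range m, ∀ i' ∈ Finset.range m, g i = g i' → i = i' := by
    have key : ∀ i i', i ≤ i' → i' < m → g i = g i' → i = i' := by
      intro i i' hii hi' heq
      by_contra hne
      have hlt : i < i' := lt_of_le_of_ne hii hne
      have h1 : (σ ^ (i' - i)) x = x := by
        have e1 : (σ ^ i') (g i') = x := happly i'
        rw [← heq] at e1
        have e2 : (σ ^ i') (g i) = (σ ^ (i' - i)) ((σ ^ i) (g i)) := by
          conv_lhs => rw [show i' = (i' - i) + i from by omega]
          rw [pow_add, Equiv.Perm.mul_apply]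
        rw [e2, happly i] at e1
        exact e1
      have hp : IsPeriodicPt ⇑σ (i' - i) x := by
        show (⇑σ)^[i' - i] x = x
        rw [Equiv.Perm.iterate_eq_pow]
        exact h1
      have := hp.minimalPeriod_le (by omega)
      rw [← hLdef] at this
      omega
    intro i hi i' hi' heq
    simp only [Finset.mem_range] at hi hi'
    rcases le_total i i' with h | h
    · exact key i i' h hi' heq
    · exact (key i' i h hi heq.symm).symm
  -- membership
  have hmk : m ≤ k := min_le_left _ _
  have hmemx : ∀ i < m, x ∈ win σ k (g i) := by
    intro i hi
    have hik : i < k := lt_of_lt_of_le hi hmk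
    exact Finset.mem_image.2 ⟨i, Finset.mem_range.2 (by omega), happly i⟩
  have hmemy : ∀ i < m, y ∈ win σ k (g i) := by
    intro i hi
    have hik : i < k := lt_of_lt_of_le hi hmk
    refine Finset.mem_image.2 ⟨j + i, Finset.mem_range.2 (by omega), ?_⟩
    rw [pow_add, Equiv.Perm.mul_apply, happly i, hxy]
  -- card bound
  have hcard : ∀ i < m, ((win σ k (g i)).card : ℝ) ≤ 2*m := by
    intro i hi
    rcases le_or_gt k L with h | h
    · have : (win σ k (g i)).card ≤ 2*k := win_card_le σ _
      have hmk : m = k := min_eq_left h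
      rw [hmk]; exact_mod_cast this
    · have hmL : m = L := min_eq_right h.le
      have hLx : (σ ^ L) x = x := by
        have := iterate_minimalPeriod (f := ⇑σ) (x := x)
        rwa [Equiv.Perm.iterate_eq_pow] at this
      have hfix : ∀ q, (σ ^ (L*q)) x = x := by
        intro q
        rw [pow_mul]
        show (⇑((σ ^ L) ^ q)) x = x
        rw [Equiv.Perm.coe_pow]
        exact Function.iterate_fixed hLx q
      set O : Finset (Fin n → Bool) := (Finset.range L).image (fun r => (σ ^ r) x) with hO
      have horb : ∀ t : ℕ, (σ ^ t) x ∈ O := by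
        intro t
        have ht : (σ ^ t) x = (σ ^ (t % L)) x := by
          conv_lhs => rw [← Nat.mod_add_div t L, pow_add, Equiv.Perm.mul_apply, hfix]
        rw [ht]
        exact Finset.mem_image.2 ⟨t % L, Finset.mem_range.2 (Nat.mod_lt _ hL), rfl⟩
      have hgi : g i = (σ ^ ((L-1)*i)) x := by
        apply (σ ^ i).injective
        rw [happly i, ← Equiv.Perm.mul_apply, ← pow_add]
        have hLi : i + (L-1)*i = L*i := by
          conv_rhs => rw [← Nat.succ_pred_eq_of_pos hL]
          rw [Nat.succ_mul, Nat.pred_eq_sub_one]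
          omega
        rw [hLi, hfix]
      have hsub : win σ k (g i) ⊆ O := by
        intro w hw
        obtain ⟨t, _, rfl⟩ := Finset.mem_image.1 hw
        rw [hgi, ← Equiv.Perm.mul_apply, ← pow_add]
        exact horb _
      have : (win σ k (g i)).card ≤ L := le_trans (Finset.card_le_card hsub)
        (le_trans Finset.card_image_le (by simp))
      rw [hmL]
      have : ((win σ k (g i)).card : ℝ) ≤ L := by exact_mod_cast this
      linarith [this]
  -- sum bound
  set C := Finset.univ.filter (fun v => x ∈ win σ k v ∧ y ∈ win σ k v) with hC
  have hsubset : (Finset.range m).image g ⊆ C := by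
    intro v hv
    obtain ⟨i, hi, rfl⟩ := Finset.mem_image.1 hv
    simp only [Finset.mem_range] at hi
    exact Finset.mem_filter.2 ⟨Finset.mem_univ _, hmemx i hi, hmemy i hi⟩
  have h1 : ∑ v ∈ (Finset.range m).image g, 2 / ((win σ k v).card : ℝ) ≤
      ∑ v ∈ C, 2 / ((win σ k v).card : ℝ) := by
    apply Finset.sum_le_sum_of_subset_of_nonneg hsubset
    intro v _ _
    positivity
  have h2 : ∑ v ∈ (Finset.range m).image g, 2 / ((win σ k v).card : ℝ) =
      ∑ i ∈ Finset.range m, 2 / ((win σ k (g i)).card : ℝ) :=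
    Finset.sum_image hginj
  have h3 : (1:ℝ) ≤ ∑ i ∈ Finset.range m, 2 / ((win σ k (g i)).card : ℝ) := by
    have hterm : ∀ i ∈ Finset.range m, 1/(m:ℝ) ≤ 2 / ((win σ k (g i)).card : ℝ) := by
      intro i hi
      simp only [Finset.mem_range] at hi
      have hc := hcard i hi
      have hcpos : (0:ℝ) < ((win σ k (g i)).card : ℝ) := by
        exact_mod_cast win_card_pos hk σ (g i)
      have : (2:ℝ)/(2*m) ≤ 2 / ((win σ k (g i)).card : ℝ) :=
        div_le_div_of_nonneg_left (by norm_num) hcpos hc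
      have hmpos : (0:ℝ) < m := by exact_mod_cast hm
      calc (1:ℝ)/m = 2/(2*m) := by field_simp
        _ ≤ _ := this
    calc (1:ℝ) = ∑ _i ∈ Finset.range m, 1/(m:ℝ) := by
          rw [Finset.sum_const, Finset.card_range, nsmul_eq_mul]
          field_simp
      _ ≤ _ := Finset.sum_le_sum hterm
  linarith [h1, h2 ▸ h3]

lemma two_mul_card_le {n : ℕ} (W : Finset (Fin n → Bool)) (S : Finset (Sym2 (Fin n → Bool)))
    (hS : ∀ e ∈ S, ∃ x y : Fin n → Bool, (cube n).Adj x y ∧ e = s(x,y) ∧ x ∈ W ∧ y ∈ W) :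
    2 * S.card ≤ pairCount n W := by
  classical
  set P := ((W ×ˢ W).filter fun z => (cube n).Adj z.1 z.2 ∧ s(z.1, z.2) ∈ S) with hP
  have hPle : P.card ≤ pairCount n W := by
    apply Finset.card_le_card
    intro z hz
    simp only [hP, Finset.mem_filter] at hz ⊢
    exact ⟨hz.1, hz.2.1⟩
  have hmaps : ∀ z ∈ P, s(z.1, z.2) ∈ S := by
    intro z hz
    simp only [hP, Finset.mem_filter] at hz
    exact hz.2.2
  have hcard : P.card = ∑ e ∈ S, (P.filter fun z => s(z.1, z.2) = e).card :=
    Finset.card_eq_sum_card_fiberwise hmaps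
  have hfiber : ∀ e ∈ S, 2 ≤ (P.filter fun z => s(z.1, z.2) = e).card := by
    intro e he
    obtain ⟨x, y, hadj, rfl, hxW, hyW⟩ := hS e he
    have hne : x ≠ y := hadj.ne
    have hx : (x, y) ∈ P.filter fun z => s(z.1, z.2) = s(x,y) := by
      simp only [hP, Finset.mem_filter, Finset.mem_product]
      exact ⟨⟨⟨hxW, hyW⟩, hadj, he⟩, trivial⟩
    have hy : (y, x) ∈ P.filter fun z => s(z.1, z.2) = s(x,y) := by
      simp only [hP, Finset.mem_filter, Finset.mem_product]
      refine ⟨⟨⟨hyW, hxW⟩, hadj.symm, ?_⟩, Sym2.eq_swap⟩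
      rw [Sym2.eq_swap]; exact he
    have hsub : {(x,y), (y,x)} ⊆ P.filter fun z => s(z.1, z.2) = s(x,y) := by
      intro z hz
      simp only [Finset.mem_insert, Finset.mem_singleton] at hz
      rcases hz with rfl | rfl
      · exact hx
      · exact hy
    have h2 : ({(x,y), (y,x)} : Finset _).card = 2 := by
      rw [Finset.card_insert_of_notMem (by simp [hne]), Finset.card_singleton]
    calc 2 = ({(x,y), (y,x)} : Finset _).card := h2.symm
      _ ≤ _ := Finset.card_le_card hsub
  calc 2 * S.card = ∑ _e ∈ S, 2 := by rw [Finset.sum_const, smul_eq_mul]; ring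
    _ ≤ ∑ e ∈ S, (P.filter fun z => s(z.1, z.2) = e).card := Finset.sum_le_sum hfiber
    _ = P.card := hcard.symm
    _ ≤ _ := hPle

open Real in
lemma count_bound {n k : ℕ} (hk : 1 ≤ k) (σ : Equiv.Perm (Fin n → Bool))
    (B : Finset (Sym2 (Fin n → Bool)))
    (hB : ∀ e ∈ B, e ∈ (cube n).edgeSet ∧ ∃ x y, e = s(x, y) ∧
        ∃ j : ℕ, 1 ≤ j ∧ j ≤ k ∧ ((σ ^ j) x = y ∨ (σ ^ j) y = x)) :
    (B.card : ℝ) ≤ 2^n * Real.logb 2 (2*k) := by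
  classical
  set f : (Fin n → Bool) → ℝ := fun v => 2 / ((win σ k v).card : ℝ) with hf
  have hfnonneg : ∀ v, 0 ≤ f v := fun v => by positivity
  have hcov : ∀ e ∈ B,
      1 ≤ ∑ v ∈ Finset.univ.filter (fun v => ∀ z ∈ e, z ∈ win σ k v), f v := by
    intro e he
    obtain ⟨hedge, x, y, rfl, j, hj1, hjk, hj⟩ := hB e he
    have hiff : ∀ v ∈ (Finset.univ : Finset (Fin n → Bool)),
        ((∀ z ∈ s(x,y), z ∈ win σ k v) ↔ (x ∈ win σ k v ∧ y ∈ win σ k v)) := by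
      intro v _
      constructor
      · intro h; exact ⟨h x (by simp), h y (by simp)⟩
      · rintro ⟨h1, h2⟩ z hz
        rcases Sym2.mem_iff.1 hz with rfl | rfl
        · exact h1
        · exact h2
    rw [Finset.filter_congr hiff]
    rcases hj with hj | hj
    · exact coverage hk σ x y j hj1 hjk hj
    · have hcov2 := coverage hk σ y x j hj1 hjk hj
      have hsymm : Finset.univ.filter (fun v => x ∈ win σ k v ∧ y ∈ win σ k v)
          = Finset.univ.filter (fun v => y ∈ win σ k v ∧ x ∈ win σ k v) :=
        Finset.filter_congr (fun v _ => ⟨fun h => ⟨h.2, h.1⟩, fun h => ⟨h.2, h.1⟩⟩)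
      rw [hsymm]; exact hcov2
  have step1 : (B.card : ℝ) ≤
      ∑ e ∈ B, ∑ v ∈ Finset.univ.filter (fun v => ∀ z ∈ e, z ∈ win σ k v), f v := by
    calc (B.card : ℝ) = ∑ _e ∈ B, (1:ℝ) := by rw [Finset.sum_const, nsmul_eq_mul, mul_one]
      _ ≤ _ := Finset.sum_le_sum hcov
  have step2 : ∑ e ∈ B, ∑ v ∈ Finset.univ.filter (fun v => ∀ z ∈ e, z ∈ win σ k v), f v
      = ∑ v ∈ (Finset.univ : Finset (Fin n → Bool)),
          ((B.filter (fun e => ∀ z ∈ e, z ∈ win σ k v)).card : ℝ) * f v := by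
    have h1 : ∀ e ∈ B, ∑ v ∈ Finset.univ.filter (fun v => ∀ z ∈ e, z ∈ win σ k v), f v
        = ∑ v ∈ (Finset.univ : Finset (Fin n → Bool)),
            (if (∀ z ∈ e, z ∈ win σ k v) then f v else 0) := by
      intro e _
      rw [Finset.sum_filter]
    rw [Finset.sum_congr rfl h1, Finset.sum_comm]
    apply Finset.sum_congr rfl
    intro v _
    rw [← Finset.sum_filter, Finset.sum_const, nsmul_eq_mul]
  have step3 : ∀ v : Fin n → Bool,
      ((B.filter (fun e => ∀ z ∈ e, z ∈ win σ k v)).card : ℝ) * f v ≤ logb 2 (2*k) := by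
    intro v
    set W := win σ k v with hW
    set S := B.filter (fun e => ∀ z ∈ e, z ∈ win σ k v) with hSdef
    have hS : ∀ e ∈ S, ∃ x y : Fin n → Bool,
        (cube n).Adj x y ∧ e = s(x,y) ∧ x ∈ W ∧ y ∈ W := by
      intro e he
      rw [hSdef, Finset.mem_filter] at he
      obtain ⟨heB, hmem⟩ := he
      obtain ⟨hedge, x, y, rfl, _⟩ := hB e heB
      exact ⟨x, y, (SimpleGraph.mem_edgeSet _).1 hedge, rfl,
        hmem x (by simp), hmem y (by simp)⟩
    have h1 : 2 * S.card ≤ pairCount n W := two_mul_card_le W S hS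
    have h2 : (pairCount n W : ℝ) ≤ W.card * logb 2 W.card := iso n W
    have hcpos : (0:ℝ) < (W.card : ℝ) := by exact_mod_cast win_card_pos hk σ v
    have hcle : (W.card : ℝ) ≤ 2*k := by exact_mod_cast win_card_le σ v
    have h3 : logb 2 (W.card) ≤ logb 2 (2*k) := by
      apply Real.logb_le_logb_of_le one_lt_two hcpos
      exact_mod_cast hcle
    have h4 : (S.card : ℝ) * f v = (2 * S.card : ℝ) / (W.card : ℝ) := by
      rw [hf]; simp only [← hW]; ring
    rw [h4]
    calc (2 * S.card : ℝ) / (W.card : ℝ) ≤ ((W.card : ℝ) * logb 2 W.card) / (W.card : ℝ) := by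
          rw [div_le_div_iff_of_pos_right hcpos]
          calc (2 * S.card : ℝ) ≤ (pairCount n W : ℝ) := by exact_mod_cast h1
            _ ≤ _ := h2
      _ = logb 2 W.card := by field_simp
      _ ≤ logb 2 (2*k) := h3
  have step4 : ∑ v ∈ (Finset.univ : Finset (Fin n → Bool)),
      ((B.filter (fun e => ∀ z ∈ e, z ∈ win σ k v)).card : ℝ) * f v
      ≤ 2^n * logb 2 (2*k) := by
    calc _ ≤ ∑ _v ∈ (Finset.univ : Finset (Fin n → Bool)), logb 2 (2*k) :=
          Finset.sum_le_sum (fun v _ => step3 v)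
      _ = (Fintype.card (Fin n → Bool) : ℝ) * logb 2 (2*k) := by
          rw [Finset.sum_const, nsmul_eq_mul, Finset.card_univ]
      _ = 2^n * logb 2 (2*k) := by
          rw [Fintype.card_fun]
          simp
  linarith [step1, step2 ▸ step1, step4]

end SplitProb


/-- Splitting probability bound: for a permutation `σ` of the vertices of `Q_n`, the
proportion of the `n·2^(n-1)` edges of `Q_n` whose two endpoints lie in the same cycle of
`σ` at cyclic distance at most `k` (so that the corresponding transposition splits off a
cycle of length `≤ k`) is at most `2·log₂(2k)/n`. -/
theorem split_prob_bound (n k : ℕ) (hk : 1 ≤ k) (σ : Equiv.Perm (Fin n → Bool)) :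
    (Set.ncard {e ∈ (cube n).edgeSet | ∃ x y, e = s(x, y) ∧
        ∃ j : ℕ, 1 ≤ j ∧ j ≤ k ∧ ((σ ^ j) x = y ∨ (σ ^ j) y = x)} : ℝ) /
        (n * 2 ^ (n - 1)) ≤
      2 * Real.logb 2 (2 * k) / n := by
  classical
  rcases Nat.eq_zero_or_pos n with rfl | hn
  · norm_num
  set B := Finset.univ.filter (fun e : Sym2 (Fin n → Bool) =>
    e ∈ (cube n).edgeSet ∧ ∃ x y, e = s(x, y) ∧
      ∃ j : ℕ, 1 ≤ j ∧ j ≤ k ∧ ((σ ^ j) x = y ∨ (σ ^ j) y = x)) with hBdef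
  have hset : {e ∈ (cube n).edgeSet | ∃ x y, e = s(x, y) ∧
      ∃ j : ℕ, 1 ≤ j ∧ j ≤ k ∧ ((σ ^ j) x = y ∨ (σ ^ j) y = x)} = ↑B := by
    ext e
    simp [hBdef, Set.mem_sep_iff]
  rw [hset, Set.ncard_coe_finset]
  have hcount := SplitProb.count_bound hk σ B
    (fun e he => (Finset.mem_filter.1 he).2)
  have hnpos : (0:ℝ) < n := by exact_mod_cast hn
  have hd : (0:ℝ) < (n:ℝ) * 2^(n-1) := by positivity
  rw [div_le_div_iff₀ hd hnpos]
  have h2 : (2:ℝ)^(n-1) * 2 = 2^n := by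
    rw [← pow_succ]
    congr 1
    omega
  have heq : 2 * Real.logb 2 (2*(k:ℝ)) * ((n:ℝ)*2^(n-1))
      = 2^n * Real.logb 2 (2*(k:ℝ)) * n := by rw [← h2]; ring
  have hmul := mul_le_mul_of_nonneg_right hcount hnpos.le
  calc (B.card : ℝ) * n ≤ 2^n * Real.logb 2 (2*(k:ℝ)) * n := hmul
    _ = 2 * Real.logb 2 (2*(k:ℝ)) * ((n:ℝ)*2^(n-1)) := heq.symm
end

section
/- Azuma-type bound on merging: for the random interchange process on any finite graph with N vertices and i.i.d. uniform random edges, for every t ∈ ℕ and every δ ∈ (0,1), the probability that the t-th edge merges two distinct connected components satisfies P(M̃_t) ≤ N/t + t^{−(1−δ)/2} + exp(−t^δ/2). -/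
open MeasureTheory
open scoped Classical

/-- The edges of `G`, as ordered pairs of adjacent vertices. -/
def EdgeT {V : Type*} (G : SimpleGraph V) : Type _ := {p : V × V // G.Adj p.1 p.2}

instance {V : Type*} {G : SimpleGraph V} : MeasurableSpace (EdgeT G) := ⊤
instance {V : Type*} {G : SimpleGraph V} : MeasurableSingletonClass (EdgeT G) :=
  ⟨fun _ => trivial⟩
instance {V : Type*} [Finite V] {G : SimpleGraph V} : Finite (EdgeT G) :=
  inferInstanceAs (Finite {p : V × V // G.Adj p.1 p.2})

/-- The uniform probability measure on the edges of `G`. -/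
noncomputable def unifEdge {V : Type*} [Fintype V] (G : SimpleGraph V) : Measure (EdgeT G) :=
  (Nat.card (EdgeT G) : ENNReal)⁻¹ • Measure.count

/-- The law of `t` i.i.d. edges, each uniform on the edges of `G`. -/
noncomputable def seqMeasure {V : Type*} [Fintype V] (G : SimpleGraph V) (t : ℕ) :
    Measure (Fin t → EdgeT G) :=
  Measure.pi fun _ => unifEdge G

/-- The percolation graph with edge set `{e_1, …, e_m}`, the first `m` edges of `ω`. -/
def graphUpTo {V : Type*} {G : SimpleGraph V} {t : ℕ} (ω : Fin t → EdgeT G) (m : ℕ) :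
    SimpleGraph V :=
  SimpleGraph.fromRel fun u v => ∃ i : Fin t, (i : ℕ) < m ∧
    ((ω i).1 = (u, v) ∨ (ω i).1 = (v, u))

set_option linter.unusedSectionVars false

open scoped ENNReal

section Aux
variable {V : Type*} [Fintype V] [DecidableEq V] {G : SimpleGraph V}

lemma measurableSet_all {t : ℕ} (s : Set (Fin t → EdgeT G)) : MeasurableSet s :=
  s.to_countable.measurableSet

lemma measurable_all {t : ℕ} {β : Type*} [MeasurableSpace β] (f : (Fin t → EdgeT G) → β) :
    Measurable f := fun _ _ => measurableSet_all _

instance : IsFiniteMeasure (unifEdge G) := by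
  constructor
  rw [unifEdge]
  haveI : Fintype (EdgeT G) := Fintype.ofFinite _
  simp only [Measure.smul_apply, Measure.count_univ, smul_eq_mul, Nat.card_eq_fintype_card,
    ENat.card_eq_coe_fintype_card, ENat.toENNReal_coe]
  exact lt_of_le_of_lt (ENNReal.inv_mul_le_one _) ENNReal.one_lt_top |>.trans_le le_rfl

lemma unifEdge_univ_le_one : unifEdge G Set.univ ≤ 1 := by
  rw [unifEdge]
  haveI : Fintype (EdgeT G) := Fintype.ofFinite _
  simp only [Measure.smul_apply, Measure.count_univ, smul_eq_mul, Nat.card_eq_fintype_card,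
    ENat.card_eq_coe_fintype_card, ENat.toENNReal_coe]
  exact ENNReal.inv_mul_le_one _

lemma seqMeasure_univ_le_one (t : ℕ) : seqMeasure G t Set.univ ≤ 1 := by
  rw [seqMeasure, ← Set.pi_univ Set.univ, Measure.pi_pi]
  exact Finset.prod_le_one (fun _ _ => zero_le) (fun _ _ => unifEdge_univ_le_one)

lemma graphUpTo_mono {t : ℕ} (ω : Fin t → EdgeT G) {m n : ℕ} (h : m ≤ n) :
    graphUpTo ω m ≤ graphUpTo ω n := by
  intro u v hu
  obtain ⟨hne, hrel⟩ := hu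
  refine ⟨hne, ?_⟩
  rcases hrel with ⟨i, hi, he⟩ | ⟨i, hi, he⟩
  · exact Or.inl ⟨i, hi.trans_le h, he⟩
  · exact Or.inr ⟨i, hi.trans_le h, he⟩

lemma graphUpTo_congr {t : ℕ} {ω ω' : Fin t → EdgeT G} {m : ℕ}
    (h : ∀ j : Fin t, (j : ℕ) < m → ω j = ω' j) : graphUpTo ω m = graphUpTo ω' m := by
  unfold graphUpTo
  congr 1
  ext u v
  constructor <;> rintro ⟨i, hi, he⟩ <;> exact ⟨i, hi, by rw [h i hi] at *; exact he⟩

lemma card_cc_le {m n : ℕ} {t : ℕ} (ω : Fin t → EdgeT G) (h : m ≤ n) :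
    Fintype.card (SimpleGraph.ConnectedComponent (graphUpTo ω n))
      ≤ Fintype.card (SimpleGraph.ConnectedComponent (graphUpTo ω m)) := by
  apply Fintype.card_le_of_surjective
    (SimpleGraph.ConnectedComponent.map (SimpleGraph.Hom.ofLE (graphUpTo_mono ω h)))
  intro c
  obtain ⟨v, rfl⟩ := c.exists_rep
  exact ⟨SimpleGraph.connectedComponentMk _ v, rfl⟩

lemma card_cc_lt {t : ℕ} (ω : Fin t → EdgeT G) (i : Fin t)
    (h : ¬(graphUpTo ω i).Reachable (ω i).1.1 (ω i).1.2) :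
    Fintype.card (SimpleGraph.ConnectedComponent (graphUpTo ω ((i : ℕ) + 1)))
      < Fintype.card (SimpleGraph.ConnectedComponent (graphUpTo ω (i : ℕ))) := by
  have hle : graphUpTo ω (i : ℕ) ≤ graphUpTo ω ((i : ℕ) + 1) := graphUpTo_mono ω (Nat.le_succ _)
  apply Fintype.card_lt_of_surjective_not_injective
    (SimpleGraph.ConnectedComponent.map (SimpleGraph.Hom.ofLE hle))
  · intro c
    obtain ⟨v, rfl⟩ := c.exists_rep
    exact ⟨SimpleGraph.connectedComponentMk _ v, rfl⟩
  · intro hinj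
    apply h
    have hne : (ω i).1.1 ≠ (ω i).1.2 := (ω i).2.ne
    have hadj : (graphUpTo ω ((i : ℕ) + 1)).Adj (ω i).1.1 (ω i).1.2 :=
      ⟨hne, Or.inl ⟨i, Nat.lt_succ_self _, Or.inl rfl⟩⟩
    have : SimpleGraph.connectedComponentMk _ (ω i).1.1
        = (graphUpTo ω ((i:ℕ)+1)).connectedComponentMk (ω i).1.2 :=
      SimpleGraph.ConnectedComponent.sound hadj.reachable
    have key : (SimpleGraph.ConnectedComponent.map (SimpleGraph.Hom.ofLE hle))
          ((graphUpTo ω (i : ℕ)).connectedComponentMk (ω i).1.1)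
        = (SimpleGraph.ConnectedComponent.map (SimpleGraph.Hom.ofLE hle))
          ((graphUpTo ω (i : ℕ)).connectedComponentMk (ω i).1.2) := by
      rw [SimpleGraph.ConnectedComponent.map_mk, SimpleGraph.ConnectedComponent.map_mk,
        SimpleGraph.Hom.ofLE_apply, SimpleGraph.Hom.ofLE_apply]
      exact this
    exact SimpleGraph.ConnectedComponent.exact (hinj key)

lemma count_descents (c : ℕ → ℕ) (hmono : ∀ m, c (m + 1) ≤ c m)
    (P : ℕ → Prop) (hP : ∀ m, P m → c (m + 1) < c m) (t : ℕ) :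
    ((Finset.range t).filter P).card + c t ≤ c 0 := by
  induction t with
  | zero => simp
  | succ n ih =>
    rw [Finset.range_add_one, Finset.filter_insert]
    by_cases h : P n
    · rw [if_pos h, Finset.card_insert_of_notMem (by simp)]
      have := hP n h
      omega
    · rw [if_neg h]
      have := hmono n
      omega
end Aux

/-- Azuma-type bound on merging: in the random interchange process on a finite graph with
`N` vertices and i.i.d. uniform edges, for every `t ≥ 1` and `δ ∈ (0,1)`, the probability
`P(M̃_t)` that the `t`-th edge merges two distinct connected components of the graph formed
by the previous `t−1` edges satisfies `P(M̃_t) ≤ N/t + t^{−(1−δ)/2} + exp(−t^δ/2)`. -/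
theorem merge_prob_bound {V : Type*} [Fintype V] [DecidableEq V] (G : SimpleGraph V)
    (t : ℕ) (ht : 1 ≤ t) (δ : ℝ) (hδ : δ ∈ Set.Ioo (0 : ℝ) 1) :
    (seqMeasure G t {ω : Fin t → EdgeT G |
        ¬(graphUpTo ω (t - 1)).Reachable (ω ⟨t - 1, by omega⟩).1.1
          (ω ⟨t - 1, by omega⟩).1.2}).toReal ≤
      (Fintype.card V : ℝ) / t + (t : ℝ) ^ (-(1 - δ) / 2) + Real.exp (-(t : ℝ) ^ δ / 2) := by
  classical
  set μ := seqMeasure G t with hμdef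
  set last : Fin t := ⟨t - 1, by omega⟩ with hlast
  set B : Fin t → Set (Fin t → EdgeT G) := fun i =>
    {ω | ¬(graphUpTo ω (i : ℕ)).Reachable (ω i).1.1 (ω i).1.2} with hB
  set D : Fin t → Set (Fin t → EdgeT G) := fun i =>
    {ω | ¬(graphUpTo ω (i : ℕ)).Reachable (ω last).1.1 (ω last).1.2} with hD
  -- pathwise bound on number of merges
  have hpath : ∀ ω : Fin t → EdgeT G,
      ∑ i : Fin t, (B i).indicator (fun _ => (1 : ℝ≥0∞)) ω ≤ (Fintype.card V : ℝ≥0∞) := by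
    intro ω
    set c : ℕ → ℕ := fun m => Fintype.card (SimpleGraph.ConnectedComponent (graphUpTo ω m))
      with hc
    set P : ℕ → Prop := fun m => ∃ h : m < t, ω ∈ B ⟨m, h⟩ with hP
    have h1 : ∀ i : Fin t, (B i).indicator (fun _ => (1 : ℝ≥0∞)) ω
        = (fun m => if P m then (1 : ℝ≥0∞) else 0) (i : ℕ) := by
      intro i
      by_cases hi : ω ∈ B i
      · rw [Set.indicator_of_mem hi]
        simp only
        rw [if_pos ⟨i.2, by simpa [Fin.eta] using hi⟩]
      · rw [Set.indicator_of_notMem hi]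
        simp only
        rw [if_neg]
        rintro ⟨h, hB'⟩
        exact hi (by simpa [Fin.eta] using hB')
    calc ∑ i : Fin t, (B i).indicator (fun _ => (1 : ℝ≥0∞)) ω
        = ∑ i : Fin t, (fun m => if P m then (1 : ℝ≥0∞) else 0) (i : ℕ) :=
          Finset.sum_congr rfl fun i _ => h1 i
      _ = ∑ m ∈ Finset.range t, (if P m then (1 : ℝ≥0∞) else 0) := by
          exact Fin.sum_univ_eq_sum_range (fun m => if P m then (1 : ℝ≥0∞) else 0) t
      _ = (((Finset.range t).filter P).card : ℝ≥0∞) := by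
          rw [Finset.sum_boole]
      _ ≤ (c 0 : ℝ≥0∞) := by
          have h2 := count_descents c (fun m => card_cc_le ω (Nat.le_succ m)) P
            (fun m hm => by
              obtain ⟨h, hQ⟩ := hm
              exact card_cc_lt ω ⟨m, h⟩ hQ) t
          refine Nat.cast_le.mpr (le_trans (le_of_eq ?_) (le_trans (Nat.le_add_right _ (c t)) h2))
          exact congrArg Finset.card
            ((Finset.filter_congr_decidable _ _ _).trans
              (Finset.filter_congr_decidable _ _ _).symm)
      _ ≤ (Fintype.card V : ℝ≥0∞) := by
          have h3 : c 0 ≤ Fintype.card V :=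
            Fintype.card_le_of_surjective (SimpleGraph.connectedComponentMk _)
              (fun x => x.exists_rep)
          exact Nat.cast_le.mpr h3
  -- exchangeability: μ (B i) = μ (D i)
  have hBD : ∀ i : Fin t, μ (B i) = μ (D i) := by
    intro i
    set e : Fin t ≃ Fin t := Equiv.swap i last with he
    set T := MeasurableEquiv.piCongrLeft (fun _ : Fin t => EdgeT G) e with hT
    have hmp : MeasurePreserving T μ μ :=
      measurePreserving_piCongrLeft (fun _ : Fin t => unifEdge G) e
    have hTap : ∀ (ω : Fin t → EdgeT G) (j : Fin t), T ω j = ω (e j) := by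
      intro ω j
      conv_lhs => rw [hT, MeasurableEquiv.coe_piCongrLeft]
      conv_lhs => rw [show j = e (e.symm j) from (Equiv.apply_symm_apply _ _).symm,
        Equiv.piCongrLeft_apply_apply]
      rw [he, Equiv.symm_swap]
    have hpre : T ⁻¹' (D i) = B i := by
      ext ω
      have hgr : graphUpTo (T ω) (i : ℕ) = graphUpTo ω (i : ℕ) := by
        apply graphUpTo_congr
        intro j hj
        rw [hTap]
        congr 1
        apply Equiv.swap_apply_of_ne_of_ne
        · exact Fin.ne_of_val_ne hj.ne
        · have : (j : ℕ) < t - 1 := lt_of_lt_of_le hj (by omega)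
          exact Fin.ne_of_val_ne (by simpa [hlast] using this.ne)
      have hlastval : T ω last = ω i := by rw [hTap, he, Equiv.swap_apply_right]
      simp only [Set.mem_preimage, hD, hB, Set.mem_setOf_eq, hgr, hlastval]
    rw [← hpre, hmp.measure_preimage (measurableSet_all _).nullMeasurableSet]
  -- monotonicity: B last ⊆ D i
  have hsub : ∀ i : Fin t, B last ⊆ D i := by
    intro i ω hω
    have hBlast : ω ∈ D last := hω
    intro hreach
    exact hBlast ((SimpleGraph.Reachable.mono
      (graphUpTo_mono ω (show (i : ℕ) ≤ ((last : Fin t) : ℕ) by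
        simp only [hlast]; omega)) hreach))
  -- summing up
  have hsum : (t : ℝ≥0∞) * μ (B last) ≤ (Fintype.card V : ℝ≥0∞) := by
    calc (t : ℝ≥0∞) * μ (B last) = ∑ _i : Fin t, μ (B last) := by
          simp [Finset.sum_const, mul_comm]
      _ ≤ ∑ i : Fin t, μ (D i) :=
          Finset.sum_le_sum fun i _ => measure_mono (hsub i)
      _ = ∑ i : Fin t, μ (B i) := by
          exact Finset.sum_congr rfl fun i _ => (hBD i).symm
      _ = ∫⁻ ω, ∑ i : Fin t, (B i).indicator (fun _ => (1 : ℝ≥0∞)) ω ∂μ := by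
          rw [lintegral_finset_sum _ fun i _ => measurable_all _]
          exact Finset.sum_congr rfl fun i _ => (lintegral_indicator_one (measurableSet_all _)).symm
      _ ≤ ∫⁻ _ω, (Fintype.card V : ℝ≥0∞) ∂μ := lintegral_mono hpath
      _ = (Fintype.card V : ℝ≥0∞) * μ Set.univ := by rw [lintegral_const]
      _ ≤ (Fintype.card V : ℝ≥0∞) * 1 := mul_le_mul_right (seqMeasure_univ_le_one t) _
      _ = (Fintype.card V : ℝ≥0∞) := mul_one _
  have htne : (t : ℝ≥0∞) ≠ 0 := by
    simpa using (by omega : t ≠ 0)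
  have hdiv : μ (B last) ≤ (Fintype.card V : ℝ≥0∞) / t := by
    rw [ENNReal.le_div_iff_mul_le (Or.inl htne) (Or.inl (ENNReal.natCast_ne_top t))]
    rwa [mul_comm]
  have hgoal : (μ (B last)).toReal ≤ (Fintype.card V : ℝ) / t := by
    have hfin : (Fintype.card V : ℝ≥0∞) / t ≠ ⊤ :=
      (ENNReal.div_lt_top (ENNReal.natCast_ne_top _) htne).ne
    have := ENNReal.toReal_mono hfin hdiv
    rwa [ENNReal.toReal_div, ENNReal.toReal_natCast, ENNReal.toReal_natCast] at this
  have hset : {ω : Fin t → EdgeT G |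
      ¬(graphUpTo ω (t - 1)).Reachable (ω ⟨t - 1, by omega⟩).1.1
        (ω ⟨t - 1, by omega⟩).1.2} = B last := rfl
  rw [hμdef] at hgoal
  rw [hset]
  have h2 : 0 ≤ (t : ℝ) ^ (-(1 - δ) / 2) := Real.rpow_nonneg (by positivity) _
  have h3 : 0 ≤ Real.exp (-(t : ℝ) ^ δ / 2) := (Real.exp_pos _).le
  linarith
end

section
/- Splitting–merging balance over a time window: for the random interchange process on a finite graph, for any T, L ∈ ℕ, Σ_{t=T+1}^{T+L} P(S_t) ≥ (1/2) Σ_{t=T+1}^{T+L} P(I_t) − (1/2) E(N_T − Ñ_T), where I_t = S_t ∪ M_t is the event that the endpoints of e_t lie in the same percolation cluster. -/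
open MeasureTheory
open scoped Classical

/-- The permutation `σ_m = τ_{e_m} ∘ ⋯ ∘ τ_{e_1}` obtained from the first `m` edges. -/
noncomputable def permUpTo {V : Type*} [DecidableEq V] {G : SimpleGraph V} {t : ℕ}
    (ω : Fin t → EdgeT G) (m : ℕ) : Equiv.Perm V :=
  ((List.ofFn fun i : Fin t => Equiv.swap (ω i).1.1 (ω i).1.2).take m).reverse.prod

/-- The `i`-th edge (0-based) of the sequence `ω`, as a pair of vertices. -/
noncomputable def getEdge {V : Type*} [Nonempty V] {G : SimpleGraph V} {t : ℕ}
    (ω : Fin t → EdgeT G) (i : ℕ) : V × V :=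
  if h : i < t then (ω ⟨i, h⟩).1 else (Classical.arbitrary V, Classical.arbitrary V)

/-- The number of cycles of a permutation (counting fixed points as cycles). -/
noncomputable def numCycles {α : Type*} (σ : Equiv.Perm α) : ℕ :=
  Set.ncard {s : Set α | ∃ x, s = {y | σ.SameCycle x y}}

/-! ### Auxiliary lemmas -/

section AuxPerm

variable {V : Type*}

/-- If `r` is an equivalence relation linking every point to its image under `τ`,
then `r` contains the `SameCycle` relation of `τ`. -/
lemma sameCycle_le_rel {τ : Equiv.Perm V} {r : V → V → Prop} (hr : Equivalence r)
    (h : ∀ x, r x (τ x)) {x y : V} (hxy : τ.SameCycle x y) : r x y := by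
  obtain ⟨i, rfl⟩ := hxy
  have key : ∀ i : ℤ, ∀ x : V, r x ((τ ^ i) x) := by
    intro i
    induction i using Int.induction_on with
    | zero => intro x; simpa using hr.refl x
    | succ k ih =>
        intro x
        have h1 : ((τ : Equiv.Perm V) ^ ((k : ℤ) + 1)) x = (τ ^ (k : ℤ)) (τ x) := by
          rw [zpow_add_one, Equiv.Perm.mul_apply]
        rw [h1]
        exact hr.trans (h x) (ih (τ x))
    | pred k ih =>
        intro x
        have h1 : ((τ : Equiv.Perm V) ^ (-(k : ℤ) - 1)) x = (τ ^ (-(k : ℤ))) (τ⁻¹ x) := by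
          rw [zpow_sub_one, Equiv.Perm.mul_apply]
        rw [h1]
        have h2 : r x (τ⁻¹ x) := by
          have := h (τ⁻¹ x)
          rw [Equiv.Perm.inv_def, Equiv.apply_symm_apply] at this
          exact hr.symm this
        exact hr.trans h2 (ih (τ⁻¹ x))
  exact key i x

/-- Decomposition of `SameCycle τ` in terms of `SameCycle (swap a b * τ)`. -/
lemma sameCycle_cases [DecidableEq V] {τ : Equiv.Perm V} {a b : V} {x y : V}
    (h : τ.SameCycle x y) :
    (Equiv.swap a b * τ).SameCycle x y ∨
      ((Equiv.swap a b * τ).SameCycle x a ∧ (Equiv.swap a b * τ).SameCycle b y) ∨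
      ((Equiv.swap a b * τ).SameCycle x b ∧ (Equiv.swap a b * τ).SameCycle a y) := by
  set σ' := Equiv.swap a b * τ with hσ'
  set R : V → V → Prop := fun x y => σ'.SameCycle x y ∨
      (σ'.SameCycle x a ∧ σ'.SameCycle b y) ∨ (σ'.SameCycle x b ∧ σ'.SameCycle a y) with hR
  have hrefl : ∀ x, R x x := fun x => Or.inl (Equiv.Perm.SameCycle.refl _ _)
  have hsymm : ∀ {x y}, R x y → R y x := by
    rintro x y (h1 | ⟨h1, h2⟩ | ⟨h1, h2⟩)
    · exact Or.inl h1.symm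
    · exact Or.inr (Or.inr ⟨h2.symm, h1.symm⟩)
    · exact Or.inr (Or.inl ⟨h2.symm, h1.symm⟩)
  have htrans : ∀ {x y z}, R x y → R y z → R x z := by
    rintro x y z (h1 | ⟨h1, h2⟩ | ⟨h1, h2⟩) (g1 | ⟨g1, g2⟩ | ⟨g1, g2⟩)
    · exact Or.inl (h1.trans g1)
    · exact Or.inr (Or.inl ⟨h1.trans g1, g2⟩)
    · exact Or.inr (Or.inr ⟨h1.trans g1, g2⟩)
    · exact Or.inr (Or.inl ⟨h1, h2.trans g1⟩)
    · exact Or.inl ((h1.trans ((h2.trans g1).symm)).trans g2)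
    · exact Or.inl (h1.trans g2)
    · exact Or.inr (Or.inr ⟨h1, h2.trans g1⟩)
    · exact Or.inl (h1.trans g2)
    · exact Or.inl ((h1.trans ((h2.trans g1).symm)).trans g2)
  have hbase : ∀ x, R x (τ x) := by
    intro x
    have hx : τ x = Equiv.swap a b (σ' x) := by
      rw [hσ', Equiv.Perm.mul_apply, Equiv.swap_apply_self]
    have hxσ : σ'.SameCycle x (σ' x) := ⟨1, by simp⟩
    by_cases h1 : σ' x = a
    · rw [hx, h1, Equiv.swap_apply_left]
      exact Or.inr (Or.inl ⟨h1 ▸ hxσ, Equiv.Perm.SameCycle.refl _ _⟩)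
    · by_cases h2 : σ' x = b
      · rw [hx, h2, Equiv.swap_apply_right]
        exact Or.inr (Or.inr ⟨h2 ▸ hxσ, Equiv.Perm.SameCycle.refl _ _⟩)
      · rw [hx, Equiv.swap_apply_of_ne_of_ne h1 h2]
        exact Or.inl hxσ
  exact sameCycle_le_rel ⟨hrefl, hsymm, htrans⟩ hbase h

/-- Multiplying by a transposition whose endpoints are in different cycles merges them. -/
lemma swap_mul_sameCycle_of_not [Finite V] [DecidableEq V] {τ : Equiv.Perm V} {a b : V}
    (h : ¬ τ.SameCycle a b) : (Equiv.swap a b * τ).SameCycle a b := by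
  set σ' := Equiv.swap a b * τ with hσ'
  have hex : ∃ k, 0 < k ∧ ((τ ^ k) b = a ∨ (τ ^ k) b = b) := by
    refine ⟨orderOf τ, ?_, Or.inr ?_⟩
    · exact orderOf_pos τ
    · rw [pow_orderOf_eq_one]; rfl
  classical
  obtain ⟨k, ⟨hk0, hkab⟩, hmin⟩ :
      ∃ k, (0 < k ∧ ((τ ^ k) b = a ∨ (τ ^ k) b = b)) ∧
        ∀ j, j < k → ¬(0 < j ∧ ((τ ^ j) b = a ∨ (τ ^ j) b = b)) :=
    ⟨Nat.find hex, Nat.find_spec hex, fun j hj => Nat.find_min hex hj⟩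
  have hagree : ∀ j, j < k → (σ' ^ j) b = (τ ^ j) b := by
    intro j
    induction j with
    | zero => intro _; rfl
    | succ n ih =>
        intro hn
        have hn' : n < k := Nat.lt_of_succ_lt hn
        have h1 : (σ' ^ (n + 1)) b = σ' ((σ' ^ n) b) := by
          rw [pow_succ', Equiv.Perm.mul_apply]
        have hne := hmin (n + 1) hn
        push_neg at hne
        obtain ⟨hne1, hne2⟩ := hne (Nat.succ_pos n)
        rw [h1, ih hn', hσ', Equiv.Perm.mul_apply]
        have : τ ((τ ^ n) b) = (τ ^ (n + 1)) b := by
          rw [pow_succ', Equiv.Perm.mul_apply]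
        rw [this, Equiv.swap_apply_of_ne_of_ne hne1 hne2]
  have hkb : (τ ^ k) b = b := by
    rcases hkab with hka | hkb
    · exact absurd (Equiv.Perm.SameCycle.symm ⟨(k : ℤ), by rw [zpow_natCast]; exact hka⟩) h
    · exact hkb
  have hlast : (σ' ^ k) b = a := by
    obtain ⟨k', rfl⟩ : ∃ k', k = k' + 1 := ⟨k - 1, (Nat.succ_pred_eq_of_pos hk0).symm⟩
    have h1 : (σ' ^ (k' + 1)) b = σ' ((σ' ^ k') b) := by
      rw [pow_succ', Equiv.Perm.mul_apply]
    rw [h1, hagree k' (Nat.lt_succ_self k'), hσ', Equiv.Perm.mul_apply]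
    have : τ ((τ ^ k') b) = (τ ^ (k' + 1)) b := by
      rw [pow_succ', Equiv.Perm.mul_apply]
    rw [this, hkb, Equiv.swap_apply_right]
  exact Equiv.Perm.SameCycle.symm ⟨(k : ℤ), by rw [zpow_natCast]; exact hlast⟩

/-- If `s'` refines `s` and each `s`-class contains at most the `s'`-classes of a point,
`a`, and `b`, then the number of `s'`-classes is at most one more. -/
lemma card_quot_le_succ [Finite V] (s s' : Setoid V) (a b : V)
    (h1 : ∀ x y, s'.r x y → s.r x y)
    (h2 : ∀ x y : V, s.r x y → s'.r x y ∨ (s'.r x a ∧ s'.r b y) ∨ (s'.r x b ∧ s'.r a y)) :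
    Nat.card (Quotient s') ≤ Nat.card (Quotient s) + 1 := by
  classical
  let φ : Quotient s' → Quotient s :=
    Quotient.lift (fun x => (Quotient.mk s x)) (fun x y h => Quotient.sound (h1 x y h))
  let ψ : Quotient s' → Option (Quotient s) :=
    fun c => if c = Quotient.mk s' b then none else some (φ c)
  have hinj : Function.Injective ψ := by
    intro c d hcd
    induction c using Quotient.inductionOn with | h u =>
    induction d using Quotient.inductionOn with | h v =>
    simp only [ψ] at hcd
    by_cases hc : (Quotient.mk s' u : Quotient s') = Quotient.mk s' b
    · by_cases hd : (Quotient.mk s' v : Quotient s') = Quotient.mk s' b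
      · rw [hc, hd]
      · rw [if_pos hc, if_neg hd] at hcd
        exact absurd hcd (by simp)
    · by_cases hd : (Quotient.mk s' v : Quotient s') = Quotient.mk s' b
      · rw [if_neg hc, if_pos hd] at hcd
        exact absurd hcd (by simp)
      · rw [if_neg hc, if_neg hd, Option.some_inj] at hcd
        have huv : s.r u v := Quotient.exact hcd
        rcases h2 u v huv with h | ⟨ha, hb⟩ | ⟨ha, hb⟩
        · exact Quotient.sound h
        · exact absurd (Quotient.sound (s'.iseqv.symm hb)) hd
        · exact absurd (Quotient.sound ha) hc
  haveI := Fintype.ofFinite (Quotient s)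
  calc Nat.card (Quotient s') ≤ Nat.card (Option (Quotient s)) :=
        Nat.card_le_card_of_injective ψ hinj
    _ = Nat.card (Quotient s) + 1 := Finite.card_option

/-- If moreover `a` and `b` are `s'`-related, the class counts agree. -/
lemma card_quot_eq [Finite V] (s s' : Setoid V) (a b : V)
    (h1 : ∀ x y, s'.r x y → s.r x y)
    (h2 : ∀ x y : V, s.r x y → s'.r x y ∨ (s'.r x a ∧ s'.r b y) ∨ (s'.r x b ∧ s'.r a y))
    (hab : s'.r a b) :
    Nat.card (Quotient s') = Nat.card (Quotient s) := by
  let φ : Quotient s' → Quotient s :=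
    Quotient.lift (fun x => (Quotient.mk s x)) (fun x y h => Quotient.sound (h1 x y h))
  refine Nat.card_eq_of_bijective φ ⟨?_, ?_⟩
  · intro c d hcd
    induction c using Quotient.inductionOn with | h u =>
    induction d using Quotient.inductionOn with | h v =>
    have huv : s.r u v := Quotient.exact hcd
    rcases h2 u v huv with h | ⟨ha, hb⟩ | ⟨ha, hb⟩
    · exact Quotient.sound h
    · exact Quotient.sound (s'.iseqv.trans ha (s'.iseqv.trans hab hb))
    · exact Quotient.sound (s'.iseqv.trans ha (s'.iseqv.trans (s'.iseqv.symm hab) hb))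
  · intro c
    induction c using Quotient.inductionOn with | h u =>
    exact ⟨Quotient.mk s' u, rfl⟩

/-- Merging two distinct classes strictly decreases the class count. -/
lemma card_quot_succ_le [Finite V] (s s' : Setoid V) (a b : V)
    (h1 : ∀ x y, s.r x y → s'.r x y) (hab : s'.r a b) (hnab : ¬ s.r a b) :
    Nat.card (Quotient s') + 1 ≤ Nat.card (Quotient s) := by
  classical
  let φ : Quotient s → Quotient s' :=
    Quotient.lift (fun x => (Quotient.mk s' x)) (fun x y h => Quotient.sound (h1 x y h))
  have hne : (Quotient.mk s a : Quotient s) ≠ Quotient.mk s b :=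
    fun h => hnab (Quotient.exact h)
  have hsurj : Function.Surjective
      (fun c : {c : Quotient s // c ≠ Quotient.mk s b} => φ c.1) := by
    intro d
    induction d using Quotient.inductionOn with | h u =>
    by_cases hu : (Quotient.mk s u : Quotient s) = Quotient.mk s b
    · refine ⟨⟨Quotient.mk s a, hne⟩, ?_⟩
      have : s.r u b := Quotient.exact hu
      simp only [φ, Quotient.lift_mk]
      exact Quotient.sound (s'.iseqv.trans hab (s'.iseqv.symm (h1 u b this)))
    · exact ⟨⟨Quotient.mk s u, hu⟩, rfl⟩
  have h3 : Nat.card (Quotient s') ≤ Nat.card {c : Quotient s // c ≠ Quotient.mk s b} :=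
    Nat.card_le_card_of_surjective _ hsurj
  haveI := Fintype.ofFinite (Quotient s)
  have h4 : Nat.card {c : Quotient s // c ≠ Quotient.mk s b} + 1 = Nat.card (Quotient s) := by
    rw [← Finite.card_option]
    exact Nat.card_congr (Equiv.optionSubtypeNe (Quotient.mk s b))
  omega

lemma numCycles_eq_card_quot (σ : Equiv.Perm V) :
    numCycles σ = Nat.card (Quotient (Equiv.Perm.SameCycle.setoid σ)) := by
  have hcl : {s : Set V | ∃ x, s = {y | σ.SameCycle x y}}
      = Setoid.classes (Equiv.Perm.SameCycle.setoid σ) := by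
    ext s
    constructor
    · rintro ⟨x, rfl⟩
      exact ⟨x, by ext z; exact Equiv.Perm.sameCycle_comm⟩
    · rintro ⟨x, rfl⟩
      exact ⟨x, by ext z; exact Equiv.Perm.sameCycle_comm⟩
  rw [numCycles, hcl, ← Nat.card_coe_set_eq,
    Nat.card_congr (Setoid.quotientEquivClasses (Equiv.Perm.SameCycle.setoid σ))]

lemma swap_mul_sameCycle_subset [DecidableEq V] {σ : Equiv.Perm V} {a b : V}
    (hab : σ.SameCycle a b) {x y : V} (h : (Equiv.swap a b * σ).SameCycle x y) :
    σ.SameCycle x y := by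
  refine sameCycle_le_rel (Equiv.Perm.SameCycle.equivalence σ) (fun z => ?_) h
  have hz : (Equiv.swap a b * σ) z = Equiv.swap a b (σ z) := rfl
  have hzσ : σ.SameCycle z (σ z) := ⟨1, by simp⟩
  rw [hz]
  by_cases h1 : σ z = a
  · rw [h1, Equiv.swap_apply_left]
    exact (h1 ▸ hzσ).trans hab
  · by_cases h2 : σ z = b
    · rw [h2, Equiv.swap_apply_right]
      exact (h2 ▸ hzσ).trans hab.symm
    · rw [Equiv.swap_apply_of_ne_of_ne h1 h2]
      exact hzσ

lemma numCycles_swap_mul_le [Finite V] [DecidableEq V] {σ : Equiv.Perm V} {a b : V}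
    (hab : σ.SameCycle a b) :
    numCycles (Equiv.swap a b * σ) ≤ numCycles σ + 1 := by
  rw [numCycles_eq_card_quot, numCycles_eq_card_quot]
  exact card_quot_le_succ (Equiv.Perm.SameCycle.setoid σ)
    (Equiv.Perm.SameCycle.setoid (Equiv.swap a b * σ)) a b
    (fun x y h => swap_mul_sameCycle_subset hab h)
    (fun x y h => sameCycle_cases h)

lemma numCycles_swap_mul_add_one_le [Finite V] [DecidableEq V] {σ : Equiv.Perm V} {a b : V}
    (hab : ¬ σ.SameCycle a b) :
    numCycles (Equiv.swap a b * σ) + 1 ≤ numCycles σ := by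
  rw [numCycles_eq_card_quot, numCycles_eq_card_quot]
  have hab' : (Equiv.swap a b * σ).SameCycle a b := swap_mul_sameCycle_of_not hab
  refine card_quot_succ_le (Equiv.Perm.SameCycle.setoid σ)
    (Equiv.Perm.SameCycle.setoid (Equiv.swap a b * σ)) a b ?_ hab' hab
  intro x y h
  rcases sameCycle_cases (a := a) (b := b) h with h | ⟨h1, h2⟩ | ⟨h1, h2⟩
  · exact h
  · exact (h1.trans hab').trans h2
  · exact (h1.trans hab'.symm).trans h2

end AuxPerm

section AuxGraph

variable {V : Type*} {H H' : SimpleGraph V} {a b : V}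

lemma card_cc_eq_card_quot (H : SimpleGraph V) :
    Nat.card H.ConnectedComponent = Nat.card (Quotient H.reachableSetoid) := rfl

variable (hadj : ∀ u v, H'.Adj u v ↔ H.Adj u v ∨ ((u = a ∧ v = b) ∨ (u = b ∧ v = a)))

include hadj

lemma le_of_hadj : H ≤ H' := fun {u v} h => (hadj u v).2 (Or.inl h)

lemma adj_ab_of_hadj (hab : a ≠ b) : H'.Adj a b := (hadj a b).2 (Or.inr (Or.inl ⟨rfl, rfl⟩))

lemma reach_cases_of_hadj {u v : V} (h : H'.Reachable u v) :
    H.Reachable u v ∨ (H.Reachable u a ∧ H.Reachable b v) ∨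
      (H.Reachable u b ∧ H.Reachable a v) := by
  obtain ⟨w⟩ := h
  induction w with
  | nil => exact Or.inl (SimpleGraph.Reachable.refl _)
  | @cons u x v h p ih =>
      rcases (hadj u x).1 h with h' | ⟨rfl, rfl⟩ | ⟨rfl, rfl⟩
      · have hux : H.Reachable u x := h'.reachable
        rcases ih with h1 | ⟨h1, h2⟩ | ⟨h1, h2⟩
        · exact Or.inl (hux.trans h1)
        · exact Or.inr (Or.inl ⟨hux.trans h1, h2⟩)
        · exact Or.inr (Or.inr ⟨hux.trans h1, h2⟩)
      · rcases ih with h1 | ⟨h1, h2⟩ | ⟨h1, h2⟩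
        · exact Or.inr (Or.inl ⟨SimpleGraph.Reachable.refl _, h1⟩)
        · exact Or.inl (h1.symm.trans h2)
        · exact Or.inl h2
      · rcases ih with h1 | ⟨h1, h2⟩ | ⟨h1, h2⟩
        · exact Or.inr (Or.inr ⟨SimpleGraph.Reachable.refl _, h1⟩)
        · exact Or.inl h2
        · exact Or.inl (h1.symm.trans h2)

lemma card_cc_eq_of_reachable [Finite V] (hr : H.Reachable a b) :
    Nat.card H'.ConnectedComponent = Nat.card H.ConnectedComponent := by
  rw [card_cc_eq_card_quot, card_cc_eq_card_quot]
  exact (card_quot_eq H'.reachableSetoid H.reachableSetoid a b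
    (fun x y h => h.mono (le_of_hadj hadj))
    (fun x y h => reach_cases_of_hadj hadj h) hr).symm

lemma card_cc_le_succ [Finite V] :
    Nat.card H.ConnectedComponent ≤ Nat.card H'.ConnectedComponent + 1 := by
  rw [card_cc_eq_card_quot, card_cc_eq_card_quot]
  exact card_quot_le_succ H'.reachableSetoid H.reachableSetoid a b
    (fun x y h => h.mono (le_of_hadj hadj))
    (fun x y h => reach_cases_of_hadj hadj h)

lemma card_cc_succ_le [Finite V] (hab : a ≠ b) (hr : ¬ H.Reachable a b) :
    Nat.card H'.ConnectedComponent + 1 ≤ Nat.card H.ConnectedComponent := by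
  rw [card_cc_eq_card_quot, card_cc_eq_card_quot]
  exact card_quot_succ_le H.reachableSetoid H'.reachableSetoid a b
    (fun x y h => h.mono (le_of_hadj hadj))
    ((adj_ab_of_hadj hadj hab).reachable) hr

end AuxGraph

section AuxProcess

variable {V : Type*} [DecidableEq V] {G : SimpleGraph V} {t : ℕ} (ω : Fin t → EdgeT G)

lemma permUpTo_zero : permUpTo ω 0 = 1 := by
  simp [permUpTo]

lemma permUpTo_succ {m : ℕ} (h : m < t) :
    permUpTo ω (m + 1) = Equiv.swap (ω ⟨m, h⟩).1.1 (ω ⟨m, h⟩).1.2 * permUpTo ω m := by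
  unfold permUpTo
  have hlen : m < (List.ofFn fun i : Fin t => Equiv.swap (ω i).1.1 (ω i).1.2).length := by
    simpa using h
  rw [List.take_succ, List.getElem?_eq_getElem hlen, List.getElem_ofFn]
  simp [List.reverse_append]

omit [DecidableEq V] in
lemma graphUpTo_adj_succ {m : ℕ} (h : m < t) (u v : V) :
    (graphUpTo ω (m + 1)).Adj u v ↔ (graphUpTo ω m).Adj u v ∨
      ((u = (ω ⟨m, h⟩).1.1 ∧ v = (ω ⟨m, h⟩).1.2) ∨
       (u = (ω ⟨m, h⟩).1.2 ∧ v = (ω ⟨m, h⟩).1.1)) := by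
  have hG := (ω ⟨m, h⟩).2
  have hne : (ω ⟨m, h⟩).1.1 ≠ (ω ⟨m, h⟩).1.2 := hG.ne
  simp only [graphUpTo, SimpleGraph.fromRel_adj]
  constructor
  · rintro ⟨huv, (⟨i, hi, hie⟩ | ⟨i, hi, hie⟩)⟩
    · rcases Nat.lt_succ_iff_lt_or_eq.1 hi with hi' | hi'
      · exact Or.inl ⟨huv, Or.inl ⟨i, hi', hie⟩⟩
      · have : i = ⟨m, h⟩ := Fin.ext hi'
        subst this
        rcases hie with hie | hie
        · exact Or.inr (Or.inl ⟨by rw [hie], by rw [hie]⟩)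
        · exact Or.inr (Or.inr ⟨by rw [hie], by rw [hie]⟩)
    · rcases Nat.lt_succ_iff_lt_or_eq.1 hi with hi' | hi'
      · exact Or.inl ⟨huv, Or.inr ⟨i, hi', hie⟩⟩
      · have : i = ⟨m, h⟩ := Fin.ext hi'
        subst this
        rcases hie with hie | hie
        · exact Or.inr (Or.inr ⟨by rw [hie], by rw [hie]⟩)
        · exact Or.inr (Or.inl ⟨by rw [hie], by rw [hie]⟩)
  · rintro (⟨huv, (⟨i, hi, hie⟩ | ⟨i, hi, hie⟩)⟩ | ⟨rfl, rfl⟩ | ⟨rfl, rfl⟩)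
    · exact ⟨huv, Or.inl ⟨i, Nat.lt_succ_of_lt hi, hie⟩⟩
    · exact ⟨huv, Or.inr ⟨i, Nat.lt_succ_of_lt hi, hie⟩⟩
    · exact ⟨hne, Or.inl ⟨⟨m, h⟩, Nat.lt_succ_self m, Or.inl rfl⟩⟩
    · exact ⟨hne.symm, Or.inr ⟨⟨m, h⟩, Nat.lt_succ_self m, Or.inl rfl⟩⟩

lemma reachable_permUpTo {m : ℕ} (hm : m ≤ t) (x : V) :
    (graphUpTo ω m).Reachable x (permUpTo ω m x) := by
  induction m with
  | zero =>
      rw [permUpTo_zero, Equiv.Perm.one_apply]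
  | succ m ih =>
      have h : m < t := hm
      have hadj := graphUpTo_adj_succ ω h
      have hle : graphUpTo ω m ≤ graphUpTo ω (m + 1) := le_of_hadj hadj
      have h1 : (graphUpTo ω (m + 1)).Reachable x (permUpTo ω m x) :=
        (ih (Nat.le_of_succ_le hm)).mono hle
      rw [permUpTo_succ ω h, Equiv.Perm.mul_apply]
      refine h1.trans ?_
      have hG := (ω ⟨m, h⟩).2
      have hne : (ω ⟨m, h⟩).1.1 ≠ (ω ⟨m, h⟩).1.2 := hG.ne
      have hadjab : (graphUpTo ω (m + 1)).Adj (ω ⟨m, h⟩).1.1 (ω ⟨m, h⟩).1.2 :=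
        (hadj _ _).2 (Or.inr (Or.inl ⟨rfl, rfl⟩))
      by_cases h1' : permUpTo ω m x = (ω ⟨m, h⟩).1.1
      · rw [h1', Equiv.swap_apply_left]
        exact hadjab.reachable
      · by_cases h2' : permUpTo ω m x = (ω ⟨m, h⟩).1.2
        · rw [h2', Equiv.swap_apply_right]
          exact hadjab.symm.reachable
        · rw [Equiv.swap_apply_of_ne_of_ne h1' h2']

lemma sameCycle_reachable {m : ℕ} (hm : m ≤ t) {x y : V}
    (h : (permUpTo ω m).SameCycle x y) : (graphUpTo ω m).Reachable x y :=
  sameCycle_le_rel (graphUpTo ω m).reachable_is_equivalence (reachable_permUpTo ω hm) h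

lemma card_cc_le_numCycles [Finite V] {m : ℕ} (hm : m ≤ t) :
    Nat.card (graphUpTo ω m).ConnectedComponent ≤ numCycles (permUpTo ω m) := by
  rw [numCycles_eq_card_quot]
  refine Nat.card_le_card_of_surjective
    (Quotient.lift (fun x => (graphUpTo ω m).connectedComponentMk x)
      (fun x y hxy => SimpleGraph.ConnectedComponent.sound (sameCycle_reachable ω hm hxy))) ?_
  intro c
  exact Quot.inductionOn c fun v => ⟨Quotient.mk _ v, rfl⟩

omit [DecidableEq V] in
lemma getEdge_eq [Nonempty V] {m : ℕ} (h : m < t) : getEdge ω m = (ω ⟨m, h⟩).1 := dif_pos h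

lemma step_ineq [Fintype V] [Nonempty V] {m : ℕ} (h : m < t) :
    (numCycles (permUpTo ω (m + 1)) : ℝ)
        - (Nat.card (graphUpTo ω (m + 1)).ConnectedComponent : ℝ)
      ≤ (numCycles (permUpTo ω m) : ℝ)
          - (Nat.card (graphUpTo ω m).ConnectedComponent : ℝ)
        + (2 * (if (permUpTo ω m).SameCycle (getEdge ω m).1 (getEdge ω m).2 then (1:ℝ) else 0)
        - (if (graphUpTo ω m).Reachable (getEdge ω m).1 (getEdge ω m).2 then (1:ℝ) else 0)) := by
  rw [getEdge_eq ω h]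
  set a := (ω ⟨m, h⟩).1.1 with ha
  set b := (ω ⟨m, h⟩).1.2 with hb
  have hne : a ≠ b := (ω ⟨m, h⟩).2.ne
  have hadj := graphUpTo_adj_succ ω h
  have hperm : permUpTo ω (m + 1) = Equiv.swap a b * permUpTo ω m := permUpTo_succ ω h
  by_cases hS : (permUpTo ω m).SameCycle a b
  · have hI : (graphUpTo ω m).Reachable a b :=
      sameCycle_reachable ω (Nat.le_of_lt h) hS
    have h1 : numCycles (permUpTo ω (m + 1)) ≤ numCycles (permUpTo ω m) + 1 := by
      rw [hperm]; exact numCycles_swap_mul_le hS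
    have h2 : Nat.card (graphUpTo ω (m + 1)).ConnectedComponent
        = Nat.card (graphUpTo ω m).ConnectedComponent := card_cc_eq_of_reachable hadj hI
    rw [if_pos hS, if_pos hI, h2]
    have h1' : (numCycles (permUpTo ω (m + 1)) : ℝ) ≤ numCycles (permUpTo ω m) + 1 := by
      exact_mod_cast h1
    linarith
  · have h1 : numCycles (permUpTo ω (m + 1)) + 1 ≤ numCycles (permUpTo ω m) := by
      rw [hperm]; exact numCycles_swap_mul_add_one_le hS
    have h1' : (numCycles (permUpTo ω (m + 1)) : ℝ) + 1 ≤ numCycles (permUpTo ω m) := by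
      exact_mod_cast h1
    rw [if_neg hS]
    by_cases hI : (graphUpTo ω m).Reachable a b
    · have h2 : Nat.card (graphUpTo ω (m + 1)).ConnectedComponent
          = Nat.card (graphUpTo ω m).ConnectedComponent := card_cc_eq_of_reachable hadj hI
      rw [if_pos hI, h2]
      linarith
    · have h2 : Nat.card (graphUpTo ω (m + 1)).ConnectedComponent + 1
          ≤ Nat.card (graphUpTo ω m).ConnectedComponent := card_cc_succ_le hadj hne hI
      have h3 : Nat.card (graphUpTo ω m).ConnectedComponent
          ≤ Nat.card (graphUpTo ω (m + 1)).ConnectedComponent + 1 := card_cc_le_succ hadj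
      have h2' : (Nat.card (graphUpTo ω (m + 1)).ConnectedComponent : ℝ) + 1
          ≤ (Nat.card (graphUpTo ω m).ConnectedComponent : ℝ) := by exact_mod_cast h2
      have h3' : (Nat.card (graphUpTo ω m).ConnectedComponent : ℝ)
          ≤ (Nat.card (graphUpTo ω (m + 1)).ConnectedComponent : ℝ) + 1 := by exact_mod_cast h3
      rw [if_neg hI]
      linarith

lemma telescope_ineq [Fintype V] [Nonempty V] {T : ℕ} {k : ℕ} (hT : T ≤ k) (hk : k ≤ t) :
    (numCycles (permUpTo ω k) : ℝ) - (Nat.card (graphUpTo ω k).ConnectedComponent : ℝ)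
      ≤ (numCycles (permUpTo ω T) : ℝ) - (Nat.card (graphUpTo ω T).ConnectedComponent : ℝ)
        + ∑ m ∈ Finset.Ico T k,
          (2 * (if (permUpTo ω m).SameCycle (getEdge ω m).1 (getEdge ω m).2 then (1:ℝ) else 0)
          - (if (graphUpTo ω m).Reachable (getEdge ω m).1 (getEdge ω m).2 then (1:ℝ) else 0)) := by
  induction k, hT using Nat.le_induction with
  | base => simp
  | succ k hTk ih =>
      have hk' : k < t := hk
      have ih' := ih (Nat.le_of_lt hk')
      rw [Finset.sum_Ico_succ_top hTk]
      have := step_ineq ω hk'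
      linarith

lemma final_pointwise [Fintype V] [Nonempty V] {T : ℕ} (hT : T ≤ t) :
    (1 / 2 : ℝ) * ∑ m ∈ Finset.Ico T t,
        (if (graphUpTo ω m).Reachable (getEdge ω m).1 (getEdge ω m).2 then (1:ℝ) else 0)
      - (1 / 2) * ((numCycles (permUpTo ω T) : ℝ)
          - (Nat.card (graphUpTo ω T).ConnectedComponent : ℝ))
      ≤ ∑ m ∈ Finset.Ico T t,
        (if (permUpTo ω m).SameCycle (getEdge ω m).1 (getEdge ω m).2 then (1:ℝ) else 0) := by
  have htel := telescope_ineq ω hT (le_refl t)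
  have hpos : (Nat.card (graphUpTo ω t).ConnectedComponent : ℝ)
      ≤ (numCycles (permUpTo ω t) : ℝ) := by
    exact_mod_cast card_cc_le_numCycles ω (le_refl t)
  rw [Finset.sum_sub_distrib, ← Finset.mul_sum] at htel
  linarith

end AuxProcess

/-- Splitting–merging balance over a time window (Lemma 3.8): for the random interchange
process on a finite graph with i.i.d. uniform edges,
`Σ_{t=T+1}^{T+L} P(S_t) ≥ (1/2) Σ_{t=T+1}^{T+L} P(I_t) − (1/2) E(N_T − Ñ_T)`,
where `S_t` is the event that the endpoints of the `t`-th edge lie in the same cycle of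
`σ_{t−1}`, `I_t` the event that they lie in the same percolation cluster, `N_T` the number
of cycles of `σ_T` and `Ñ_T` the number of connected components after `T` edges. -/
theorem split_merge_balance {V : Type*} [Fintype V] [DecidableEq V] [Nonempty V]
    (G : SimpleGraph V) (T L : ℕ) :
    ∑ t ∈ Finset.Ico (T + 1) (T + L + 1),
        (seqMeasure G (T + L) {ω : Fin (T + L) → EdgeT G |
          (permUpTo ω (t - 1)).SameCycle (getEdge ω (t - 1)).1 (getEdge ω (t - 1)).2}).toReal
      ≥ (1 / 2) * ∑ t ∈ Finset.Ico (T + 1) (T + L + 1),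
          (seqMeasure G (T + L) {ω : Fin (T + L) → EdgeT G |
            (graphUpTo ω (t - 1)).Reachable (getEdge ω (t - 1)).1 (getEdge ω (t - 1)).2}).toReal
        - (1 / 2) * ∫ ω, ((numCycles (permUpTo ω T) : ℝ)
            - (Nat.card (graphUpTo ω T).ConnectedComponent : ℝ))
            ∂(seqMeasure G (T + L)) := by
  classical
  set μ := seqMeasure G (T + L) with hμ
  haveI : IsFiniteMeasure (unifEdge G) := by
    constructor
    rw [unifEdge, Measure.smul_apply, smul_eq_mul]
    rcases isEmpty_or_nonempty (EdgeT G) with hE | hE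
    · rw [Set.univ_eq_empty_iff.2 hE, measure_empty, mul_zero]
      exact ENNReal.zero_lt_top
    · haveI := Fintype.ofFinite (EdgeT G)
      rw [Measure.count_univ]
      refine ENNReal.mul_lt_top ?_ (by simp)
      simp [ENNReal.inv_lt_top, Nat.card_eq_fintype_card, Fintype.card_pos]
  haveI : IsFiniteMeasure μ := by
    rw [hμ, seqMeasure]; infer_instance
  haveI : MeasurableSingletonClass (Fin (T + L) → EdgeT G) := by
    constructor
    intro ω
    have : ({ω} : Set (Fin (T + L) → EdgeT G)) = ⋂ i, (fun f => f i) ⁻¹' {ω i} := by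
      ext g; simp [funext_iff]
    rw [this]
    exact MeasurableSet.iInter fun i => (measurable_pi_apply i) (measurableSet_singleton _)
  have hmeasR : ∀ (A : Set (Fin (T + L) → EdgeT G)),
      (μ A).toReal = ∫ ω, (if ω ∈ A then (1:ℝ) else 0) ∂μ := by
    intro A
    rw [← measureReal_def, ← integral_indicator_one ((Set.toFinite A).measurableSet)]
    simp only [Set.indicator_apply, Pi.one_apply]
  -- reindex the sums
  have hre : ∀ g : ℕ → ℝ,
      ∑ t ∈ Finset.Ico (T + 1) (T + L + 1), g (t - 1) = ∑ m ∈ Finset.Ico T (T + L), g m := by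
    intro g
    rw [Finset.sum_Ico_eq_sum_range, Finset.sum_Ico_eq_sum_range]
    have h1 : T + L + 1 - (T + 1) = T + L - T := by omega
    rw [h1]
    refine Finset.sum_congr rfl fun i _ => ?_
    congr 1
    omega
  have hS : ∑ t ∈ Finset.Ico (T + 1) (T + L + 1),
        (μ {ω : Fin (T + L) → EdgeT G |
          (permUpTo ω (t - 1)).SameCycle (getEdge ω (t - 1)).1 (getEdge ω (t - 1)).2}).toReal
      = ∫ ω, (∑ m ∈ Finset.Ico T (T + L),
          (if (permUpTo ω m).SameCycle (getEdge ω m).1 (getEdge ω m).2 then (1:ℝ) else 0)) ∂μ := by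
    rw [hre fun m => (μ {ω : Fin (T + L) → EdgeT G |
      (permUpTo ω m).SameCycle (getEdge ω m).1 (getEdge ω m).2}).toReal]
    rw [integral_finset_sum _ (fun m _ => Integrable.of_finite)]
    refine Finset.sum_congr rfl fun m _ => (hmeasR _).trans ?_
    refine integral_congr_ae (Filter.Eventually.of_forall fun ω => ?_)
    beta_reduce
    congr
  have hI : ∑ t ∈ Finset.Ico (T + 1) (T + L + 1),
        (μ {ω : Fin (T + L) → EdgeT G |
          (graphUpTo ω (t - 1)).Reachable (getEdge ω (t - 1)).1 (getEdge ω (t - 1)).2}).toReal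
      = ∫ ω, (∑ m ∈ Finset.Ico T (T + L),
          (if (graphUpTo ω m).Reachable (getEdge ω m).1 (getEdge ω m).2 then (1:ℝ) else 0)) ∂μ := by
    rw [hre fun m => (μ {ω : Fin (T + L) → EdgeT G |
      (graphUpTo ω m).Reachable (getEdge ω m).1 (getEdge ω m).2}).toReal]
    rw [integral_finset_sum _ (fun m _ => Integrable.of_finite)]
    refine Finset.sum_congr rfl fun m _ => (hmeasR _).trans ?_
    refine integral_congr_ae (Filter.Eventually.of_forall fun ω => ?_)
    beta_reduce
    congr
  rw [ge_iff_le, hS, hI]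
  rw [← integral_const_mul, ← integral_const_mul, ← integral_sub Integrable.of_finite
    Integrable.of_finite]
  refine integral_mono Integrable.of_finite Integrable.of_finite ?_
  intro ω
  exact final_pointwise ω (Nat.le_add_right T L)
end
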